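/- arXiv:1507.06862 — 5 statements merged into one kernel-verified Lean document; each statement's English description precedes it below -/
import Mathlib

section
/- Let 𝔖 be an almost-arithmetic cofinite G-semimatroid. Then for every molecule (R,F,T) of S_𝔖=(E_𝔖,𝒞̲,rk̲), m_𝔖(R)·m_𝔖(R∪F∪T) = m_𝔖(R∪T)·m_𝔖(R∪F). -/
open scoped Classical Pointwise


/-- A finitary semimatroid on the ground set `S`: a nonempty, finite-dimensional
simplicial complex `C` of finite subsets of `S` (containing all singletons), together
with a rank function satisfying (R1)-(R3), (CR1), (CR2). -/
structure FinSemimatroid (S : Type*) [DecidableEq S] where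
  C : Set (Finset S)
  rk : Finset S → ℕ
  nonempty : C.Nonempty
  downClosed : ∀ ⦃X Y : Finset S⦄, X ∈ C → Y ⊆ X → Y ∈ C
  singleton_mem : ∀ x : S, ({x} : Finset S) ∈ C
  finDim : ∃ d : ℕ, ∀ X ∈ C, X.card ≤ d
  r1 : ∀ X ∈ C, rk X ≤ X.card
  r2 : ∀ ⦃X Y : Finset S⦄, X ∈ C → Y ∈ C → X ⊆ Y → rk X ≤ rk Y
  r3 : ∀ ⦃X Y : Finset S⦄, X ∈ C → Y ∈ C → X ∪ Y ∈ C →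
    rk (X ∪ Y) + rk (X ∩ Y) ≤ rk X + rk Y
  cr1 : ∀ ⦃X Y : Finset S⦄, X ∈ C → Y ∈ C → rk X = rk (X ∩ Y) → X ∪ Y ∈ C
  cr2 : ∀ ⦃X Y : Finset S⦄, X ∈ C → Y ∈ C → rk X < rk Y →
    ∃ y ∈ Y, y ∉ X ∧ insert y X ∈ C

namespace FinSemimatroid

variable {S : Type*} [DecidableEq S]

/-- The closure of a central set. -/
def cl (M : FinSemimatroid S) (X : Finset S) : Set S :=
  {y : S | insert y X ∈ M.C ∧ M.rk (insert y X) = M.rk X}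

/-- A flat is a closed central set. -/
def IsFlat (M : FinSemimatroid S) (X : Finset S) : Prop :=
  X ∈ M.C ∧ M.cl X = (X : Set S)

/-- The poset of flats, ordered by inclusion. -/
abbrev Flats (M : FinSemimatroid S) : Type _ := {X : Finset S // M.IsFlat X}

/-- A simple finitary semimatroid. -/
def Simple (M : FinSemimatroid S) : Prop :=
  (∀ x : S, M.rk {x} = 1) ∧
    ∀ x y : S, x ≠ y → ({x, y} : Finset S) ∈ M.C → M.rk {x, y} = 2

end FinSemimatroid

/-- A poset is chain-finite if all its chains are finite. -/
def ChainFinite (L : Type*) [PartialOrder L] : Prop :=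
  ∀ c : Set L, IsChain (· ≤ ·) c → c.Finite

/-- An atom of a bounded-below poset: an element covering the minimum. -/
def PosetAtom {L : Type*} [PartialOrder L] (a : L) : Prop :=
  ∃ bot : L, IsBot bot ∧ bot ⋖ a

/-- `L` (with rank function `rk`) is a finite geometric lattice (finite, bounded below,
a lattice, ranked by `rk`, atomic and semimodular) with at most `N` atoms. -/
def IsFinGeomLatticeAtMost (L : Type*) [PartialOrder L] (rk : L → ℕ) (N : ℕ) : Prop :=
  Finite L ∧
    ∃ bot : L, IsBot bot ∧
      (∀ x y : L, ∃ m : L, IsGLB {x, y} m) ∧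
      (∀ x y : L, ∃ j : L, IsLUB {x, y} j) ∧
      (∀ x y : L, x ⋖ y → rk y = rk x + 1) ∧
      (∀ x : L, ∃ A : Set L, (∀ a ∈ A, bot ⋖ a) ∧ IsLUB A x) ∧
      (∀ x y m j : L, IsGLB {x, y} m → IsLUB {x, y} j → rk j + rk m ≤ rk x + rk y) ∧
      Nat.card {a : L | bot ⋖ a} ≤ N
/-- A `G`-semimatroid: an action of `G` on a finitary semimatroid, preserving
centrality and rank. -/
structure GSemimatroid (G S : Type*) [Group G] [MulAction G S] [DecidableEq S]
    extends FinSemimatroid S where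
  smul_mem : ∀ (g : G) ⦃X : Finset S⦄, X ∈ C → X.image (g • ·) ∈ C
  rk_smul : ∀ (g : G) ⦃X : Finset S⦄, X ∈ C → rk (X.image (g • ·)) = rk X

namespace GSemimatroid

variable {G S : Type*} [Group G] [MulAction G S] [DecidableEq S]

/-- The set of orbits `E_𝔖 = S/G`. -/
abbrev E (G S : Type*) [Group G] [MulAction G S] : Type _ :=
  Quotient (MulAction.orbitRel G S)

/-- The orbit of a point. -/
def orbOf (G : Type*) {S : Type*} [Group G] [MulAction G S] (x : S) : E G S :=
  Quotient.mk (MulAction.orbitRel G S) x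

/-- `X̲`: the set of orbits met by `X`. -/
def under (G : Type*) {S : Type*} [Group G] [MulAction G S] (X : Finset S) :
    Set (E G S) :=
  orbOf G '' (X : Set S)

variable (M : GSemimatroid G S)

/-- `𝒞̲ = {X̲ : X ∈ 𝒞}`. -/
def CQ : Set (Set (E G S)) := {A | ∃ X ∈ M.C, under G X = A}

/-- `rk̲ A = max { rk X : X ∈ 𝒞, X̲ ⊆ A }`. -/
noncomputable def rkQ (A : Set (E G S)) : ℕ :=
  sSup {n : ℕ | ∃ X ∈ M.C, under G X ⊆ A ∧ M.rk X = n}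

/-- `𝒞_A`: the central sets lying over `A`. -/
def CA (A : Set (E G S)) : Set (Finset S) := {X | X ∈ M.C ∧ under G X = A}

/-- The type of central sets. -/
abbrev Cen : Type _ := {X : Finset S // X ∈ M.C}

/-- The `G`-orbit relation on central sets. -/
def cenRel (X Y : M.Cen) : Prop := ∃ g : G, X.1.image (g • ·) = Y.1

/-- The set `𝒞/G` of orbits of central sets. -/
def COrb : Type _ := Quot M.cenRel

/-- The action is cofinite if `𝒞/G` is finite. -/
def Cofinite : Prop := Finite M.COrb

/-- `m_𝔖(A) = |𝒞_A / G|`. -/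
noncomputable def m (A : Set (E G S)) : ℕ :=
  Nat.card {O : M.COrb // ∃ X : M.Cen, under G X.1 = A ∧ Quot.mk M.cenRel X = O}

def WeaklyTranslative : Prop :=
  ∀ (g : G) (x : S), ({x, g • x} : Finset S) ∈ M.C →
    M.rk {x, g • x} = M.rk ({x} : Finset S)

def Translative : Prop :=
  ∀ (g : G) (x : S), ({x, g • x} : Finset S) ∈ M.C → g • x = x

def Centered : Prop := ∃ X ∈ M.C, under G X = (Set.univ : Set (E G S))

def Normal (_M : GSemimatroid G S) : Prop :=
  ∀ x : S, Subgroup.Normal (MulAction.stabilizer G x)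

def AlmostArithmetic : Prop := M.Translative ∧ M.Normal

/-- The action is arithmetic: almost-arithmetic, and for every central `X` the set
`W(X) ⊆ Γ^X` is a subgroup (expressed via representative families of group elements). -/
def Arithmetic : Prop :=
  M.AlmostArithmetic ∧
    ∀ ⦃X : Finset S⦄, X ∈ M.C → ∀ γ δ : S → G,
      X.image (fun x => γ x • x) ∈ M.C → X.image (fun x => δ x • x) ∈ M.C →
        X.image (fun x => (γ x * δ x) • x) ∈ M.C ∧
          X.image (fun x => (γ x)⁻¹ • x) ∈ M.C

/-- Remove from `X` all elements of the orbit `a₀`. -/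
noncomputable def strip (a₀ : E G S) (X : Finset S) : Finset S :=
  X.filter (fun x => orbOf G x ≠ a₀)

/-- The Tutte polynomial of a `G`-semimatroid, as a function `ℤ × ℤ → ℤ`. -/
noncomputable def Tutte (x y : ℤ) : ℤ :=
  ∑ᶠ A ∈ M.CQ, (M.m A : ℤ) * (x - 1) ^ (M.rkQ Set.univ - M.rkQ A) *
    (y - 1) ^ (Nat.card A - M.rkQ A)

end GSemimatroid

open GSemimatroid
set_option linter.unusedSectionVars false
namespace MoleculeAux

open GSemimatroid

variable {G S : Type*} [Group G] [MulAction G S] [DecidableEq S]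

lemma orbOf_smul (g : G) (x : S) : orbOf G (g • x) = orbOf G x :=
  Quot.sound ⟨g, rfl⟩

lemma orbOf_eq_iff {x y : S} : orbOf G x = orbOf G y ↔ ∃ g : G, g • y = x := by
  constructor
  · intro h
    exact MulAction.mem_orbit_iff.mp (Quotient.exact h)
  · rintro ⟨g, rfl⟩
    exact orbOf_smul g y

lemma mem_under {X : Finset S} {a : E G S} :
    a ∈ under G X ↔ ∃ x ∈ X, orbOf G x = a := by
  simp [under]

lemma under_union (X Y : Finset S) : under G (X ∪ Y) = under G X ∪ under G Y := by
  simp [under, Set.image_union]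

lemma under_insert (v : S) (X : Finset S) :
    under G (insert v X) = insert (orbOf G v) (under G X) := by
  simp [under, Set.image_insert_eq]

lemma under_mono {X Y : Finset S} (h : X ⊆ Y) : under G X ⊆ under G Y :=
  Set.image_mono (by exact_mod_cast h)

lemma image_image_smul (g h : G) (X : Finset S) :
    (X.image (g • ·)).image (h • ·) = X.image ((h * g) • ·) := by
  rw [Finset.image_image]
  apply Finset.image_congr
  intro x _
  simp [mul_smul]

lemma image_one_smul (X : Finset S) : X.image ((1 : G) • ·) = X := by simp

lemma under_smul (g : G) (X : Finset S) : under G (X.image (g • ·)) = under G X := by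
  unfold under
  rw [Finset.coe_image, Set.image_image]
  simp [orbOf_smul]

lemma image_eq_of_pointwise {W : Finset S} (g : G) (h : ∀ w ∈ W, g • w = w) :
    W.image (g • ·) = W := by
  ext x
  simp only [Finset.mem_image]
  constructor
  · rintro ⟨w, hw, rfl⟩
    rw [h w hw]; exact hw
  · intro hx; exact ⟨x, hx, h x hx⟩

variable (M : GSemimatroid G S)

lemma empty_mem_C : (∅ : Finset S) ∈ M.C := by
  obtain ⟨X, hX⟩ := M.nonempty
  exact M.downClosed hX (Finset.empty_subset X)

lemma smul_mem_C_iff (g : G) {X : Finset S} :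
    X.image (g • ·) ∈ M.C ↔ X ∈ M.C := by
  constructor
  · intro h
    have := M.smul_mem g⁻¹ h
    rwa [image_image_smul, inv_mul_cancel, image_one_smul] at this
  · exact fun h => M.smul_mem g h

lemma cenRel_equivalence : Equivalence M.cenRel := by
  constructor
  · exact fun X => ⟨1, image_one_smul X.1⟩
  · rintro X Y ⟨g, hg⟩
    exact ⟨g⁻¹, by rw [← hg, image_image_smul, inv_mul_cancel, image_one_smul]⟩
  · rintro X Y Z ⟨g, hg⟩ ⟨h, hh⟩
    exact ⟨h * g, by rw [← hh, ← hg, image_image_smul]⟩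

lemma quot_mk_eq_iff {X Y : M.Cen} :
    Quot.mk M.cenRel X = Quot.mk M.cenRel Y ↔ M.cenRel X Y :=
  ⟨fun h => ((cenRel_equivalence M).eqvGen_iff).mp (Quot.eqvGen_exact h), Quot.sound⟩

lemma central_trans (htl : M.Translative) {X : Finset S} (hX : X ∈ M.C) :
    ∀ x ∈ X, ∀ y ∈ X, orbOf G x = orbOf G y → x = y := by
  intro x hx y hy h
  obtain ⟨g, hg⟩ := orbOf_eq_iff.mp h.symm
  have hpair : ({x, g • x} : Finset S) ∈ M.C := by
    refine M.downClosed hX ?_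
    intro z hz
    rcases Finset.mem_insert.mp hz with rfl | hz
    · exact hx
    · rw [Finset.mem_singleton.mp hz, hg]; exact hy
  have h2 : g • x = x := htl g x hpair
  rw [← hg, h2]

lemma pointwise_of_setwise (htl : M.Translative) {X : Finset S} (hX : X ∈ M.C) (g : G)
    (hset : X.image (g • ·) = X) : ∀ x ∈ X, g • x = x := by
  intro x hx
  have hgx : g • x ∈ X := by
    rw [← hset]; exact Finset.mem_image_of_mem _ hx
  exact central_trans M htl hX _ hgx _ hx (orbOf_smul g x)

lemma rkQ_bddAbove (A : Set (E G S)) :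
    BddAbove {n : ℕ | ∃ X ∈ M.C, under G X ⊆ A ∧ M.rk X = n} := by
  obtain ⟨d, hd⟩ := M.finDim
  exact ⟨d, by rintro n ⟨X, hX, -, rfl⟩; exact (M.r1 X hX).trans (hd X hX)⟩

lemma rk_le_rkQ {X : Finset S} (hX : X ∈ M.C) {A : Set (E G S)} (h : under G X ⊆ A) :
    M.rk X ≤ M.rkQ A :=
  le_csSup (rkQ_bddAbove M A) ⟨X, hX, h, rfl⟩

lemma rkQ_under (htl : M.Translative) {X : Finset S} (hX : X ∈ M.C) :
    M.rkQ (under G X) = M.rk X := by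
  refine le_antisymm (csSup_le ⟨M.rk X, X, hX, subset_rfl, rfl⟩ ?_) (rk_le_rkQ M hX subset_rfl)
  rintro n ⟨Z, hZ, hZu, rfl⟩
  by_contra hlt
  push_neg at hlt
  obtain ⟨z, hzZ, hzX, hins⟩ := M.cr2 hX hZ hlt
  have hmem : orbOf G z ∈ under G X := hZu (mem_under.mpr ⟨z, hzZ, rfl⟩)
  obtain ⟨x, hxX, hx⟩ := mem_under.mp hmem
  have hxz := central_trans M htl hins x (Finset.mem_insert_of_mem hxX) z
    (Finset.mem_insert_self z X) hx
  exact hzX (hxz ▸ hxX)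

end MoleculeAux
namespace MoleculeAux

variable {G S : Type*} [Group G] [MulAction G S] [DecidableEq S]
variable (M : GSemimatroid G S)

/-- Restriction of a central set to a set of orbits is central. -/
lemma restrict_mem {X : Finset S} (hX : X ∈ M.C) (A : Set (E G S)) :
    X.filter (fun x => orbOf G x ∈ A) ∈ M.C :=
  M.downClosed hX (Finset.filter_subset _ X)

lemma under_restrict (X : Finset S) (A : Set (E G S)) :
    under G (X.filter (fun x => orbOf G x ∈ A)) = under G X ∩ A := by
  ext a
  simp only [mem_under, Finset.mem_filter, Set.mem_inter_iff]
  constructor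
  · rintro ⟨x, ⟨hx, hxa⟩, rfl⟩
    exact ⟨⟨x, hx, rfl⟩, hxa⟩
  · rintro ⟨⟨x, hx, rfl⟩, ha⟩
    exact ⟨x, ⟨hx, ha⟩, rfl⟩

lemma filter_smul_comm (g : G) (X : Finset S) (A : Set (E G S)) :
    (X.image (g • ·)).filter (fun x => orbOf G x ∈ A)
      = (X.filter (fun x => orbOf G x ∈ A)).image (g • ·) := by
  ext y
  simp only [Finset.mem_filter, Finset.mem_image]
  constructor
  · rintro ⟨⟨x, hx, rfl⟩, hy⟩
    exact ⟨x, ⟨hx, by rwa [orbOf_smul] at hy⟩, rfl⟩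
  · rintro ⟨x, ⟨hx, hxa⟩, rfl⟩
    exact ⟨⟨x, hx, rfl⟩, by rwa [orbOf_smul]⟩

lemma filter_union_left {W V : Finset S} {A : Set (E G S)}
    (hW : ∀ x ∈ W, orbOf G x ∈ A) (hV : ∀ x ∈ V, orbOf G x ∉ A) :
    (W ∪ V).filter (fun x => orbOf G x ∈ A) = W := by
  ext x
  simp only [Finset.mem_filter, Finset.mem_union]
  constructor
  · rintro ⟨h | h, ha⟩
    · exact h
    · exact absurd ha (hV x h)
  · intro h
    exact ⟨Or.inl h, hW x h⟩

lemma filter_cover {X : Finset S} {A B : Set (E G S)}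
    (h : ∀ x ∈ X, orbOf G x ∈ A ∪ B) :
    X.filter (fun x => orbOf G x ∈ A) ∪ X.filter (fun x => orbOf G x ∈ B) = X := by
  ext x
  simp only [Finset.mem_union, Finset.mem_filter]
  constructor
  · rintro (⟨hx, -⟩ | ⟨hx, -⟩) <;> exact hx
  · intro hx
    rcases h x hx with ha | hb
    · exact Or.inl ⟨hx, ha⟩
    · exact Or.inr ⟨hx, hb⟩

/-- Uniqueness of torsion extensions. -/
lemma unique_ext (htl : M.Translative) {W : Finset S} {v v' : S} (hW : W ∈ M.C)
    (h1 : insert v W ∈ M.C) (h2 : insert v' W ∈ M.C)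
    (horb : orbOf G v = orbOf G v') (hvW : orbOf G v ∉ under G W)
    (hr1 : M.rk (insert v W) = M.rk W) (hr2 : M.rk (insert v' W) = M.rk W) :
    v = v' := by
  by_cases hne : v = v'
  · exact hne
  have hvWm : v ∉ W := fun h => hvW (mem_under.mpr ⟨v, h, rfl⟩)
  have hv'Wm : v' ∉ W := fun h => hvW (by rw [horb]; exact mem_under.mpr ⟨v', h, rfl⟩)
  have hinter : insert v W ∩ insert v' W = W := by
    ext z
    simp only [Finset.mem_inter, Finset.mem_insert]
    constructor
    · rintro ⟨rfl | h1', rfl | h2'⟩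
      · exact absurd rfl hne
      · exact absurd h2' hvWm
      · exact absurd h1' hv'Wm
      · exact h1'
    · intro hz
      exact ⟨Or.inr hz, Or.inr hz⟩
  have hU : insert v W ∪ insert v' W ∈ M.C :=
    M.cr1 h1 h2 (by rw [hinter]; exact hr1)
  obtain ⟨g, hg⟩ := orbOf_eq_iff.mp horb.symm
  have hpair : ({v, g • v} : Finset S) ∈ M.C := by
    rw [hg]
    refine M.downClosed hU ?_
    rw [Finset.insert_subset_iff, Finset.singleton_subset_iff]
    exact ⟨Finset.mem_union_left _ (Finset.mem_insert_self v W),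
      Finset.mem_union_right _ (Finset.mem_insert_self v' W)⟩
  have hfix : g • v = v := htl g v hpair
  exact (hfix.symm.trans hg)

/-- A free extension always exists and is unrestricted. -/
lemma step_free (htl : M.Translative) {W Z : Finset S} {SA : Set (E G S)} {v : S}
    (hW : W ∈ M.C) (hWu : under G W = SA) (hv : orbOf G v ∉ SA)
    (hZ : Z ∈ M.C) (hZu : under G Z = insert (orbOf G v) SA)
    (hrk : M.rkQ (insert (orbOf G v) SA) = M.rkQ SA + 1) :
    insert v W ∈ M.C := by
  have hrkW : M.rk W = M.rkQ SA := by rw [← hWu, rkQ_under M htl hW]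
  have hrkZ : M.rk Z = M.rkQ SA + 1 := by rw [← hrk, ← hZu, rkQ_under M htl hZ]
  obtain ⟨z, hzZ, hzW, hins⟩ := M.cr2 hW hZ (by omega)
  have hzorb : orbOf G z = orbOf G v := by
    have hz : orbOf G z ∈ insert (orbOf G v) SA := by
      rw [← hZu]; exact mem_under.mpr ⟨z, hzZ, rfl⟩
    rcases Set.mem_insert_iff.mp hz with h | h
    · exact h
    · exfalso
      rw [← hWu] at h
      obtain ⟨x, hxX, hx⟩ := mem_under.mp h
      have := central_trans M htl hins x (Finset.mem_insert_of_mem hxX) z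
        (Finset.mem_insert_self z W) hx
      exact hzW (this ▸ hxX)
  by_cases hzv : z = v
  · rwa [hzv] at hins
  have hZ'u : under G (insert z W) = insert (orbOf G v) SA := by
    rw [under_insert, hzorb, hWu]
  have hrkZ' : M.rk (insert z W) = M.rkQ SA + 1 := by
    rw [← hrk, ← hZ'u, rkQ_under M htl hins]
  have hvW : v ∉ W := fun h => hv (by rw [← hWu]; exact mem_under.mpr ⟨v, h, rfl⟩)
  have key : ∀ n : ℕ, ∀ X : Finset S, X ∈ M.C → v ∈ X → X ⊆ insert v W →
      (insert v W).card ≤ X.card + n → insert v W ∈ M.C := by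
    intro n
    induction n with
    | zero =>
      intro X hX hvX hXs hcard
      exact Finset.eq_of_subset_of_card_le hXs (by omega) ▸ hX
    | succ n ih =>
      intro X hX hvX hXs hcard
      by_cases hfull : insert v W ⊆ X
      · exact Finset.Subset.antisymm hXs hfull ▸ hX
      by_cases hr : M.rk X < M.rk (insert z W)
      · obtain ⟨z', hz'Z, hz'X, hins'⟩ := M.cr2 hX hins hr
        have hz'W : z' ∈ W := by
          rcases Finset.mem_insert.mp hz'Z with rfl | h
          · exfalso
            obtain ⟨g, hg⟩ := orbOf_eq_iff.mp hzorb
            have hpair : ({v, g • v} : Finset S) ∈ M.C := by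
              rw [hg]
              refine M.downClosed hins' ?_
              rw [Finset.insert_subset_iff, Finset.singleton_subset_iff]
              exact ⟨Finset.mem_insert_of_mem hvX, Finset.mem_insert_self z' X⟩
            have hfixv := htl g v hpair
            exact hzv (by rw [← hg]; exact hfixv)
          · exact h
        refine ih (insert z' X) hins' (Finset.mem_insert_of_mem hvX) ?_ ?_
        · exact Finset.insert_subset (Finset.mem_insert_of_mem hz'W) hXs
        · rw [Finset.card_insert_of_notMem hz'X]; omega
      · push_neg at hr
        have hXle : M.rk X ≤ M.rkQ SA + 1 := by
          rw [← hrk]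
          refine rk_le_rkQ M hX ?_
          calc under G X ⊆ under G (insert v W) := under_mono hXs
            _ = insert (orbOf G v) SA := by rw [under_insert, hWu]
        have hrkX : M.rk X = M.rkQ SA + 1 := le_antisymm hXle (by omega)
        have hXWC : X ∩ W ∈ M.C := M.downClosed hX Finset.inter_subset_left
        have hXdec : (X ∩ W) ∪ {v} = X := by
          ext x
          simp only [Finset.mem_union, Finset.mem_inter, Finset.mem_singleton]
          constructor
          · rintro (⟨h1', -⟩ | rfl)
            · exact h1'
            · exact hvX
          · intro hx
            rcases Finset.mem_insert.mp (hXs hx) with rfl | h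
            · exact Or.inr rfl
            · exact Or.inl ⟨hx, h⟩
        have hr3 := M.r3 hXWC (M.singleton_mem v) (by rw [hXdec]; exact hX)
        rw [hXdec] at hr3
        have hvnotin : (X ∩ W) ∩ {v} = ∅ := by
          ext x
          simp only [Finset.mem_inter, Finset.mem_singleton, Finset.notMem_empty, iff_false,
            not_and]
          rintro ⟨-, hxW⟩ rfl
          exact hvW hxW
        have hrksing : M.rk {v} ≤ 1 := by
          simpa using M.r1 {v} (M.singleton_mem v)
        have hXW_le : M.rk (X ∩ W) ≤ M.rkQ SA := by
          refine rk_le_rkQ M hXWC ?_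
          rw [← hWu]
          exact under_mono Finset.inter_subset_right
        have hXW_ge : M.rkQ SA ≤ M.rk (X ∩ W) := by
          rw [hvnotin] at hr3
          omega
        have hXWrk : M.rk (X ∩ W) = M.rkQ SA := le_antisymm hXW_le hXW_ge
        have hUC : W ∪ X ∈ M.C := by
          refine M.cr1 hW hX ?_
          rw [Finset.inter_comm W X, hXWrk]
          exact hrkW
        have hWX : W ∪ X = insert v W := by
          ext x
          simp only [Finset.mem_union, Finset.mem_insert]
          constructor
          · rintro (h | h)
            · exact Or.inr h
            · rcases Finset.mem_insert.mp (hXs h) with rfl | h'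
              · exact Or.inl rfl
              · exact Or.inr h'
          · rintro (rfl | h)
            · exact Or.inr hvX
            · exact Or.inl h
        rwa [hWX] at hUC
  refine key (insert v W).card {v} (M.singleton_mem v) (Finset.mem_singleton_self v)
    (Finset.singleton_subset_iff.mpr (Finset.mem_insert_self v W)) ?_
  simp

/-- Normality: an element fixing one transversal pointwise fixes all covered orbits. -/
lemma fix_orbit_of_fix_transversal (hnorm : M.Normal) {W : Finset S} {SA : Set (E G S)}
    (hWu : under G W = SA) (g : G) (hfix : ∀ w ∈ W, g • w = w) :
    ∀ x : S, orbOf G x ∈ SA → g • x = x := by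
  intro x hx
  rw [← hWu] at hx
  obtain ⟨w, hw, hww⟩ := mem_under.mp hx
  obtain ⟨h, hh⟩ := orbOf_eq_iff.mp hww.symm
  have hgstab : g ∈ MulAction.stabilizer G w := by
    rw [MulAction.mem_stabilizer_iff]; exact hfix w hw
  have hconj : h⁻¹ * g * h ∈ MulAction.stabilizer G w := by
    have := (hnorm w).conj_mem g hgstab h⁻¹
    simpa using this
  have hc : (h⁻¹ * g * h) • w = w := MulAction.mem_stabilizer_iff.mp hconj
  calc g • x = g • (h • w) := by rw [hh]
    _ = (g * h) • w := (mul_smul g h w).symm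
    _ = (h * (h⁻¹ * g * h)) • w := by congr 1; group
    _ = h • ((h⁻¹ * g * h) • w) := mul_smul _ _ _
    _ = h • w := by rw [hc]
    _ = x := hh

end MoleculeAux
namespace MoleculeAux

variable {G S : Type*} [Group G] [MulAction G S] [DecidableEq S]

/-- Transversals of a set of orbits. -/
def TransF (G : Type*) {S : Type*} [Group G] [MulAction G S] (FS : Set (E G S)) : Type _ :=
  {V : Finset S // under G V = FS ∧ ∀ x ∈ V, ∀ y ∈ V, orbOf G x = orbOf G y → x = y}

/-- Relation on transversals: translation by an element of `N`. -/
def relN (N : Subgroup G) (FS : Set (E G S)) : TransF G FS → TransF G FS → Prop :=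
  fun V V' => ∃ n ∈ N, V.1.image (n • ·) = V'.1

/-- Quotient of the transversals by `N`. -/
abbrev QTF (N : Subgroup G) (FS : Set (E G S)) := Quot (relN (S := S) N FS)

/-- The set of orbits of central sets lying over `A`. -/
abbrev OT (M : GSemimatroid G S) (A : Set (E G S)) : Type _ :=
  {O : M.COrb // ∃ X : M.Cen, under G X.1 = A ∧ Quot.mk M.cenRel X = O}

variable (M : GSemimatroid G S)

lemma m_eq_card (A : Set (E G S)) : M.m A = Nat.card (OT M A) := rfl

/-- Context bundle for the product decomposition. -/
structure Ctx (A FS : Set (E G S)) (N : Subgroup G) : Prop where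
  htl : M.Translative
  hdisj : Disjoint A FS
  hNfix : ∀ g ∈ N, ∀ W : Finset S, W ∈ M.C → under G W = A → ∀ w ∈ W, g • w = w
  hNrev : ∀ (g : G) (W : Finset S), W ∈ M.C → under G W = A → W.image (g • ·) = W → g ∈ N
  hext : ∀ W V : Finset S, W ∈ M.C → under G W = A → under G V = FS →
    (∀ x ∈ V, ∀ y ∈ V, orbOf G x = orbOf G y → x = y) → W ∪ V ∈ M.C

/-- Canonical representative of a class over `A`. -/
noncomputable def repC {A : Set (E G S)} (O : OT M A) : M.Cen := O.2.choose

lemma repC_under {A : Set (E G S)} (O : OT M A) : under G (repC M O).1 = A :=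
  O.2.choose_spec.1

lemma repC_mk {A : Set (E G S)} (O : OT M A) : Quot.mk M.cenRel (repC M O) = O.1 :=
  O.2.choose_spec.2

/-- The class over `A` of a central set over `A`. -/
noncomputable def clsA {A : Set (E G S)} (W : Finset S) (hW : W ∈ M.C) (hWu : under G W = A) : OT M A :=
  ⟨Quot.mk M.cenRel ⟨W, hW⟩, ⟨W, hW⟩, hWu, rfl⟩

lemma clsA_rel {A : Set (E G S)} (W : Finset S) (hW : W ∈ M.C) (hWu : under G W = A) :
    M.cenRel ⟨W, hW⟩ (repC M (clsA M W hW hWu)) :=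
  (quot_mk_eq_iff M).mp (repC_mk M (clsA M W hW hWu)).symm

/-- Transport element aligning a central set over `A` with the canonical representative
of its class. -/
noncomputable def tg {A : Set (E G S)} (W : Finset S) (hW : W ∈ M.C) (hWu : under G W = A) :
    G :=
  (clsA_rel M W hW hWu).choose

lemma tg_spec {A : Set (E G S)} (W : Finset S) (hW : W ∈ M.C) (hWu : under G W = A) :
    W.image ((tg M W hW hWu) • ·) = (repC M (clsA M W hW hWu)).1 :=
  (clsA_rel M W hW hWu).choose_spec

section EquivConstruction

variable {A FS : Set (E G S)} {N : Subgroup G}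

/-- `A`-part of a finite set. -/
noncomputable def partOf (A : Set (E G S)) (X : Finset S) : Finset S :=
  X.filter (fun x => orbOf G x ∈ A)

lemma partOf_mem {X : Finset S} (hX : X ∈ M.C) : partOf A X ∈ M.C :=
  restrict_mem M hX A

lemma partOf_under (X : Finset S) : under G (partOf A X) = under G X ∩ A :=
  under_restrict X A

lemma partOf_subset (B : Set (E G S)) (X : Finset S) : partOf B X ⊆ X :=
  Finset.filter_subset _ X

lemma partOf_memC {X : Finset S} (hX : X ∈ M.C) (B : Set (E G S)) : partOf B X ∈ M.C :=
  M.downClosed hX (partOf_subset B X)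

lemma partA_under {X : Finset S} (hXu : under G X = A ∪ FS) :
    under G (partOf A X) = A := by
  rw [partOf_under, hXu, Set.union_inter_cancel_left]

lemma partFS_under {X : Finset S} (hXu : under G X = A ∪ FS) :
    under G (partOf FS X) = FS := by
  rw [partOf_under, hXu, Set.union_inter_cancel_right]

lemma partOf_union {X : Finset S} (hXu : under G X = A ∪ FS) :
    partOf A X ∪ partOf FS X = X := by
  refine filter_cover ?_
  intro x hx
  rw [← hXu]
  exact mem_under.mpr ⟨x, hx, rfl⟩

lemma partOf_smul (g : G) (X : Finset S) (B : Set (E G S)) :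
    partOf B (X.image (g • ·)) = (partOf B X).image (g • ·) :=
  filter_smul_comm g X B

lemma partOf_union_left (hdisj : Disjoint A FS) {W V : Finset S}
    (hWu : under G W = A) (hVu : under G V = FS) :
    partOf A (W ∪ V) = W := by
  refine filter_union_left ?_ ?_
  · intro x hx
    rw [← hWu]; exact mem_under.mpr ⟨x, hx, rfl⟩
  · intro x hx
    have : orbOf G x ∈ FS := by rw [← hVu]; exact mem_under.mpr ⟨x, hx, rfl⟩
    exact Set.disjoint_right.mp hdisj this

lemma partOf_union_right (hdisj : Disjoint A FS) {W V : Finset S}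
    (hWu : under G W = A) (hVu : under G V = FS) :
    partOf FS (W ∪ V) = V := by
  rw [Finset.union_comm]
  refine filter_union_left ?_ ?_
  · intro x hx
    rw [← hVu]; exact mem_under.mpr ⟨x, hx, rfl⟩
  · intro x hx
    have : orbOf G x ∈ A := by rw [← hWu]; exact mem_under.mpr ⟨x, hx, rfl⟩
    exact Set.disjoint_left.mp hdisj this

lemma trans_image {V : Finset S} (g : G)
    (h : ∀ x ∈ V, ∀ y ∈ V, orbOf G x = orbOf G y → x = y) :
    ∀ x ∈ V.image (g • ·), ∀ y ∈ V.image (g • ·), orbOf G x = orbOf G y → x = y := by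
  rintro x hx y hy hxy
  obtain ⟨x', hx', rfl⟩ := Finset.mem_image.mp hx
  obtain ⟨y', hy', rfl⟩ := Finset.mem_image.mp hy
  rw [orbOf_smul, orbOf_smul] at hxy
  rw [h x' hx' y' hy' hxy]

lemma partFS_trans (htl : M.Translative) {X : Finset S} (hX : X ∈ M.C) :
    ∀ x ∈ partOf FS X, ∀ y ∈ partOf FS X, orbOf G x = orbOf G y → x = y :=
  fun x hx y hy h => central_trans M htl hX x (Finset.filter_subset _ _ hx) y
    (Finset.filter_subset _ _ hy) h

/-- Forward map, on representatives. -/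
noncomputable def fwd0 (hc : Ctx M A FS N) (X : M.Cen) (hXu : under G X.1 = A ∪ FS) :
    OT M A × QTF N FS :=
  (clsA M (partOf A X.1) (partOf_mem M X.2) (partA_under hXu),
   Quot.mk _ ⟨(partOf FS X.1).image
      ((tg M (partOf A X.1) (partOf_mem M X.2) (partA_under hXu)) • ·),
    by rw [under_smul]; exact partFS_under hXu,
    trans_image _ (partFS_trans M hc.htl X.2)⟩)

/-- Forward map. -/
noncomputable def fwd (hc : Ctx M A FS N) (O : OT M (A ∪ FS)) : OT M A × QTF N FS :=
  fwd0 M hc (repC M O) (repC_under M O)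

/-- Backward map, on transversal representatives. -/
noncomputable def bwd0 (hc : Ctx M A FS N) (O : OT M A) (V : TransF G FS) :
    OT M (A ∪ FS) :=
  ⟨Quot.mk M.cenRel ⟨(repC M O).1 ∪ V.1,
      hc.hext _ _ (repC M O).2 (repC_under M O) V.2.1 V.2.2⟩,
    ⟨_, by rw [under_union, repC_under M O, V.2.1], rfl⟩⟩

lemma bwd0_fst (hc : Ctx M A FS N) (O : OT M A) (V : TransF G FS) :
    (bwd0 M hc O V).1 = Quot.mk M.cenRel ⟨(repC M O).1 ∪ V.1,
      hc.hext _ _ (repC M O).2 (repC_under M O) V.2.1 V.2.2⟩ := rfl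

lemma bwd0_sound (hc : Ctx M A FS N) (O : OT M A) {V V' : TransF G FS}
    (h : relN N FS V V') : bwd0 M hc O V = bwd0 M hc O V' := by
  obtain ⟨n, hn, hnV⟩ := h
  apply Subtype.ext
  rw [bwd0_fst, bwd0_fst]
  apply Quot.sound
  refine ⟨n, ?_⟩
  rw [Finset.image_union, hnV,
    image_eq_of_pointwise n (hc.hNfix n hn (repC M O).1 (repC M O).2 (repC_under M O))]

/-- Backward map. -/
noncomputable def bwd (hc : Ctx M A FS N) (p : OT M A × QTF N FS) : OT M (A ∪ FS) :=
  Quot.lift (bwd0 M hc p.1) (fun _ _ h => bwd0_sound M hc p.1 h) p.2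

end EquivConstruction

end MoleculeAux
namespace MoleculeAux

variable {G S : Type*} [Group G] [MulAction G S] [DecidableEq S]
variable (M : GSemimatroid G S)
variable {A FS : Set (E G S)} {N : Subgroup G}

lemma clsA_fst (W : Finset S) (hW : W ∈ M.C) (hWu : under G W = A) :
    (clsA M W hW hWu).1 = Quot.mk M.cenRel ⟨W, hW⟩ := rfl

lemma fwd0_fst (hc : Ctx M A FS N) (X : M.Cen) (hXu : under G X.1 = A ∪ FS) :
    (fwd0 M hc X hXu).1 = clsA M (partOf A X.1) (partOf_mem M X.2) (partA_under hXu) := rfl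

lemma qtf_mk_eq {V V' : TransF G FS} (h : V.1 = V'.1) :
    Quot.mk (relN N FS) V = Quot.mk (relN N FS) V' := by
  rw [Subtype.ext h]

lemma bwd_fwd0 (hc : Ctx M A FS N) (X : M.Cen) (hXu : under G X.1 = A ∪ FS) :
    (bwd M hc (fwd0 M hc X hXu)).1 = Quot.mk M.cenRel X := by
  set g := tg M (partOf A X.1) (partOf_mem M X.2) (partA_under hXu) with hgdef
  have key : X.1.image (g • ·)
      = (repC M (clsA M (partOf A X.1) (partOf_mem M X.2) (partA_under hXu))).1
        ∪ (partOf FS X.1).image (g • ·) := by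
    conv_lhs => rw [← partOf_union hXu]
    rw [Finset.image_union, hgdef, tg_spec]
  have hmem : (repC M (clsA M (partOf A X.1) (partOf_mem M X.2) (partA_under hXu))).1
      ∪ (partOf FS X.1).image (g • ·) ∈ M.C := by
    rw [← key]; exact (smul_mem_C_iff M g).mpr X.2
  exact (Quot.sound (⟨g, key⟩ : M.cenRel X ⟨_, hmem⟩)).symm

lemma bwd_fwd (hc : Ctx M A FS N) (O : OT M (A ∪ FS)) : bwd M hc (fwd M hc O) = O := by
  apply Subtype.ext
  exact (bwd_fwd0 M hc (repC M O) (repC_under M O)).trans (repC_mk M O)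

lemma fwd0_snd_eq (hc : Ctx M A FS N) (X : M.Cen) (hXu : under G X.1 = A ∪ FS)
    (V : TransF G FS) (n : G)
    (himg : V.1.image (n • ·) = partOf FS X.1)
    (hNg : tg M (partOf A X.1) (partOf_mem M X.2) (partA_under hXu) * n ∈ N) :
    (fwd0 M hc X hXu).2 = Quot.mk (relN N FS) V := by
  refine ((Quot.sound ?_).symm)
  refine ⟨_, hNg, ?_⟩
  rw [← image_image_smul, himg]

lemma fwd_bwd (hc : Ctx M A FS N) (O : OT M A) (q : QTF N FS) :
    fwd M hc (bwd M hc (O, q)) = (O, q) := by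
  induction q using Quot.ind with
  | _ V =>
  have hmk := repC_mk M (bwd0 M hc O V)
  rw [bwd0_fst] at hmk
  have hrel := (quot_mk_eq_iff M).mp hmk
  obtain ⟨h, hh⟩ := (cenRel_equivalence M).symm hrel
  -- hh : ((repC M O).1 ∪ V.1).image (h • ·) = (repC M (bwd0 M hc O V)).1
  have hWpart : partOf A (repC M (bwd0 M hc O V)).1 = (repC M O).1.image (h • ·) := by
    rw [← hh, partOf_smul, partOf_union_left hc.hdisj (repC_under M O) V.2.1]
  have hVpart : partOf FS (repC M (bwd0 M hc O V)).1 = V.1.image (h • ·) := by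
    rw [← hh, partOf_smul, partOf_union_right hc.hdisj (repC_under M O) V.2.1]
  have hfst' : clsA M (partOf A (repC M (bwd0 M hc O V)).1)
      (partOf_mem M (repC M (bwd0 M hc O V)).2)
      (partA_under (repC_under M (bwd0 M hc O V))) = O := by
    apply Subtype.ext
    rw [clsA_fst, ← repC_mk M O]
    apply Quot.sound
    refine ⟨h⁻¹, ?_⟩
    show (partOf A (repC M (bwd0 M hc O V)).1).image (h⁻¹ • ·) = (repC M O).1
    rw [hWpart, image_image_smul, inv_mul_cancel, image_one_smul]
  obtain ⟨g', hg'⟩ : ∃ g', tg M (partOf A (repC M (bwd0 M hc O V)).1)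
      (partOf_mem M (repC M (bwd0 M hc O V)).2)
      (partA_under (repC_under M (bwd0 M hc O V))) = g' := ⟨_, rfl⟩
  have hgspec := tg_spec M (partOf A (repC M (bwd0 M hc O V)).1)
      (partOf_mem M (repC M (bwd0 M hc O V)).2)
      (partA_under (repC_under M (bwd0 M hc O V)))
  rw [hfst', hg'] at hgspec
  rw [hWpart, image_image_smul] at hgspec
  have hN : g' * h ∈ N :=
    hc.hNrev _ _ (repC M O).2 (repC_under M O) hgspec
  refine Prod.ext ?_ ?_
  · show (fwd0 M hc (repC M (bwd0 M hc O V)) (repC_under M (bwd0 M hc O V))).1 = O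
    rw [fwd0_fst]
    exact hfst'
  · show (fwd0 M hc (repC M (bwd0 M hc O V)) (repC_under M (bwd0 M hc O V))).2
      = Quot.mk (relN N FS) V
    refine fwd0_snd_eq M hc _ _ V h hVpart.symm ?_
    rw [hg']
    exact hN

lemma card_mul (hc : Ctx M A FS N) :
    Nat.card (OT M (A ∪ FS)) = Nat.card (OT M A) * Nat.card (QTF N FS) := by
  rw [← Nat.card_prod]
  refine Nat.card_congr ⟨fwd M hc, bwd M hc, ?_, ?_⟩
  · intro O
    exact bwd_fwd M hc O
  · intro p
    obtain ⟨O, q⟩ := p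
    exact fwd_bwd M hc O q

end MoleculeAux
open MoleculeAux in
/-- For an almost-arithmetic cofinite `G`-semimatroid, the
multiplicity function is multiplicative on molecules:
`m(R)·m(R∪F∪T) = m(R∪T)·m(R∪F)`. -/
theorem almostArithmetic_molecule_multiplicative
    {G S : Type*} [Group G] [MulAction G S] [DecidableEq S]
    (M : GSemimatroid G S) (hcof : M.Cofinite) (haa : M.AlmostArithmetic) :
    ∀ R F T : Finset (E G S),
      Disjoint R F → Disjoint R T → Disjoint F T →
      (↑(R ∪ F ∪ T) : Set (E G S)) ∈ M.CQ →
      (∀ A : Finset (E G S), R ⊆ A → A ⊆ R ∪ F ∪ T →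
        M.rkQ ↑A = M.rkQ ↑R + (A ∩ F).card) →
      M.m ↑R * M.m ↑(R ∪ F ∪ T) = M.m ↑(R ∪ T) * M.m ↑(R ∪ F) := by
  intro R F T hRF hRT hFT hCQ hmol
  classical
  obtain ⟨htl, hnorm⟩ := haa
  obtain ⟨X₀, hX₀C, hX₀u⟩ := hCQ
  -- the pointwise stabilizer of the orbits in `R`
  let N : Subgroup G :=
    { carrier := {g : G | ∀ x : S, orbOf G x ∈ (↑R : Set (E G S)) → g • x = x}
      one_mem' := fun x _ => one_smul G x
      mul_mem' := by
        intro a b ha hb x hx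
        rw [mul_smul, hb x hx, ha x hx]
      inv_mem' := by
        intro a ha x hx
        rw [inv_smul_eq_iff, ha x hx] }
  have hNmem : ∀ g : G, g ∈ N ↔ ∀ x : S, orbOf G x ∈ (↑R : Set (E G S)) → g • x = x :=
    fun g => Iff.rfl
  have hRsub : R ⊆ R ∪ F ∪ T := Finset.subset_union_left.trans Finset.subset_union_left
  have hRF0 : R ∩ F = ∅ := Finset.disjoint_iff_inter_eq_empty.mp hRF
  -- restriction of the global central set
  have hres : ∀ A' : Finset (E G S), A' ⊆ R ∪ F ∪ T →
      ∃ Z : Finset S, Z ∈ M.C ∧ under G Z = ↑A' := by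
    intro A' hA'
    refine ⟨partOf (↑A' : Set (E G S)) X₀, partOf_memC M hX₀C _, ?_⟩
    rw [partOf_under, hX₀u]
    exact Set.inter_eq_right.mpr (Finset.coe_subset.mpr hA')
  -- rank of torsion extensions
  have hrk_t : ∀ t ∈ T, M.rkQ ↑(insert t R) = M.rkQ ↑R := by
    intro t ht
    have hsub : insert t R ⊆ R ∪ F ∪ T :=
      Finset.insert_subset (Finset.mem_union_right _ ht) hRsub
    rw [hmol (insert t R) (Finset.subset_insert t R) hsub,
      Finset.insert_inter_of_notMem (Finset.disjoint_right.mp hFT ht), hRF0]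
    simp
  -- free extensions
  have grow : ∀ n : ℕ, ∀ V : Finset S, V.card ≤ n →
      (∀ x ∈ V, ∀ y ∈ V, orbOf G x = orbOf G y → x = y) →
      (∀ x ∈ V, orbOf G x ∈ (↑F : Set (E G S))) →
      ∀ (A' : Finset (E G S)) (W : Finset S), R ⊆ A' → A' ⊆ R ∪ F ∪ T →
        W ∈ M.C → under G W = ↑A' → (∀ x ∈ V, orbOf G x ∉ (↑A' : Set (E G S))) →
        W ∪ V ∈ M.C := by
    intro n
    induction n with
    | zero =>
      intro V hV _ _ A' W _ _ hW _ _
      rw [Finset.card_eq_zero.mp (Nat.le_zero.mp hV), Finset.union_empty]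
      exact hW
    | succ n ih =>
      intro V hV htv hVF A' W hRA' hA' hW hWu hVA'
      rcases Finset.eq_empty_or_nonempty V with rfl | ⟨v, hv⟩
      · rw [Finset.union_empty]; exact hW
      · have htF : orbOf G v ∈ F := Finset.mem_coe.mp (hVF v hv)
        have htA' : orbOf G v ∉ A' := fun hmem => hVA' v hv (Finset.mem_coe.mpr hmem)
        have hA''R : R ⊆ insert (orbOf G v) A' := hRA'.trans (Finset.subset_insert _ _)
        have hA''sub : insert (orbOf G v) A' ⊆ R ∪ F ∪ T :=
          Finset.insert_subset (Finset.mem_union_left _ (Finset.mem_union_right _ htF)) hA'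
        have hfree : M.rkQ ↑(insert (orbOf G v) A') = M.rkQ ↑A' + 1 := by
          rw [hmol _ hA''R hA''sub, hmol _ hRA' hA',
            Finset.insert_inter_of_mem htF,
            Finset.card_insert_of_notMem
              (fun hmem => htA' (Finset.mem_of_mem_inter_left hmem))]
          omega
        obtain ⟨Z, hZC, hZu⟩ := hres (insert (orbOf G v) A') hA''sub
        have hstep : insert v W ∈ M.C := by
          refine step_free M htl hW hWu (fun hmem => htA' (Finset.mem_coe.mp hmem)) hZC ?_ ?_
          · rw [← Finset.coe_insert]; exact hZu
          · rw [← Finset.coe_insert]; exact hfree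
        have hWu' : under G (insert v W) = ↑(insert (orbOf G v) A') := by
          rw [under_insert, hWu, Finset.coe_insert]
        have hcard : (V.erase v).card ≤ n := by
          rw [Finset.card_erase_of_mem hv]
          have := Finset.card_pos.mpr ⟨v, hv⟩
          omega
        have htv' : ∀ x ∈ V.erase v, ∀ y ∈ V.erase v, orbOf G x = orbOf G y → x = y :=
          fun x hx y hy => htv x (Finset.erase_subset _ _ hx) y (Finset.erase_subset _ _ hy)
        have hVF' : ∀ x ∈ V.erase v, orbOf G x ∈ (↑F : Set (E G S)) :=
          fun x hx => hVF x (Finset.erase_subset _ _ hx)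
        have hnotin : ∀ x ∈ V.erase v, orbOf G x ∉ (↑(insert (orbOf G v) A') : Set (E G S)) := by
          intro x hx hmem
          rw [Finset.coe_insert] at hmem
          rcases hmem with heq | hmem'
          · exact Finset.ne_of_mem_erase hx
              (htv x (Finset.erase_subset _ _ hx) v hv heq)
          · exact hVA' x (Finset.erase_subset _ _ hx) hmem'
        have hrec := ih (V.erase v) hcard htv' hVF' (insert (orbOf G v) A') (insert v W)
          hA''R hA''sub hstep hWu' hnotin
        have hunion : insert v W ∪ V.erase v = W ∪ V := by
          ext y
          simp only [Finset.mem_union, Finset.mem_insert, Finset.mem_erase]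
          constructor
          · rintro ((rfl | hy) | ⟨-, hy⟩)
            · exact Or.inr hv
            · exact Or.inl hy
            · exact Or.inr hy
          · rintro (hy | hy)
            · exact Or.inl (Or.inr hy)
            · by_cases hyv : y = v
              · exact Or.inl (Or.inl hyv)
              · exact Or.inr ⟨hyv, hy⟩
        rw [← hunion]
        exact hrec
  -- context for the base `R`
  have hNfixR : ∀ g ∈ N, ∀ W : Finset S, W ∈ M.C → under G W = ↑R → ∀ w ∈ W, g • w = w := by
    intro g hg W _ hWu w hw
    exact (hNmem g).mp hg w (by rw [← hWu]; exact mem_under.mpr ⟨w, hw, rfl⟩)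
  have hNrevR : ∀ (g : G) (W : Finset S), W ∈ M.C → under G W = ↑R →
      W.image (g • ·) = W → g ∈ N := by
    intro g W hWC hWu hset
    exact (hNmem g).mpr
      (fix_orbit_of_fix_transversal M hnorm hWu g (pointwise_of_setwise M htl hWC g hset))
  have hextR : ∀ W V : Finset S, W ∈ M.C → under G W = ↑R → under G V = ↑F →
      (∀ x ∈ V, ∀ y ∈ V, orbOf G x = orbOf G y → x = y) → W ∪ V ∈ M.C := by
    intro W V hWC hWu hVu htv
    refine grow V.card V le_rfl htv ?_ R W Finset.Subset.rfl hRsub hWC hWu ?_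
    · intro x hx; rw [← hVu]; exact mem_under.mpr ⟨x, hx, rfl⟩
    · intro x hx hmem
      have hxF : orbOf G x ∈ (↑F : Set (E G S)) := by
        rw [← hVu]; exact mem_under.mpr ⟨x, hx, rfl⟩
      exact Finset.disjoint_left.mp hRF (Finset.mem_coe.mp hmem) (Finset.mem_coe.mp hxF)
  have ctx1 : Ctx M (↑R) (↑F) N := ⟨htl, Finset.disjoint_coe.mpr hRF, hNfixR, hNrevR, hextR⟩
  -- context for the base `R ∪ T`
  have hNfixRT : ∀ g ∈ N, ∀ X : Finset S, X ∈ M.C → under G X = ↑(R ∪ T) →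
      ∀ x ∈ X, g • x = x := by
    intro g hg X hXC hXu x hx
    have horb : orbOf G x ∈ (↑R : Set (E G S)) ∪ (↑T : Set (E G S)) := by
      rw [← Finset.coe_union, ← hXu]
      exact mem_under.mpr ⟨x, hx, rfl⟩
    rcases horb with hR | hT
    · exact (hNmem g).mp hg x hR
    · set W := partOf (↑R : Set (E G S)) X with hWdef
      have hWC : W ∈ M.C := partOf_memC M hXC _
      have hWu : under G W = ↑R := by
        rw [hWdef, partOf_under, hXu, Finset.coe_union, Set.union_inter_cancel_left]
      have hWsub : W ⊆ X := partOf_subset _ _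
      have h1 : insert x W ∈ M.C := M.downClosed hXC (Finset.insert_subset hx hWsub)
      have hgfixW : ∀ w ∈ W, g • w = w := fun w hw =>
        (hNmem g).mp hg w (by rw [← hWu]; exact mem_under.mpr ⟨w, hw, rfl⟩)
      have h2 : insert (g • x) W ∈ M.C := by
        refine M.downClosed (M.smul_mem g hXC) ?_
        rw [Finset.insert_subset_iff]
        exact ⟨Finset.mem_image_of_mem _ hx,
          fun w hw => Finset.mem_image.mpr ⟨w, hWsub hw, hgfixW w hw⟩⟩
      have htT : orbOf G x ∈ T := Finset.mem_coe.mp hT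
      have hu1 : under G (insert x W) = ↑(insert (orbOf G x) R) := by
        rw [under_insert, hWu, Finset.coe_insert]
      have hu2 : under G (insert (g • x) W) = ↑(insert (orbOf G x) R) := by
        rw [under_insert, orbOf_smul, hWu, Finset.coe_insert]
      have hr1 : M.rk (insert x W) = M.rk W := by
        rw [← rkQ_under M htl h1, ← rkQ_under M htl hWC, hu1, hWu, hrk_t _ htT]
      have hr2 : M.rk (insert (g • x) W) = M.rk W := by
        rw [← rkQ_under M htl h2, ← rkQ_under M htl hWC, hu2, hWu, hrk_t _ htT]
      have hnotR : orbOf G x ∉ under G W := by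
        rw [hWu]
        intro hmem
        exact Finset.disjoint_left.mp hRT (Finset.mem_coe.mp hmem) htT
      exact (unique_ext M htl hWC h1 h2 (orbOf_smul g x).symm hnotR hr1 hr2).symm
  have hNfixRT' : ∀ g ∈ N, ∀ X : Finset S, X ∈ M.C → under G X = ↑(R ∪ T) →
      ∀ x ∈ X, g • x = x := hNfixRT
  have hNrevRT : ∀ (g : G) (X : Finset S), X ∈ M.C → under G X = ↑(R ∪ T) →
      X.image (g • ·) = X → g ∈ N := by
    intro g X hXC hXu hset
    have hpt := pointwise_of_setwise M htl hXC g hset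
    have hWu : under G (partOf (↑R : Set (E G S)) X) = ↑R := by
      rw [partOf_under, hXu, Finset.coe_union, Set.union_inter_cancel_left]
    exact (hNmem g).mpr (fix_orbit_of_fix_transversal M hnorm hWu g
      (fun w hw => hpt w (partOf_subset _ _ hw)))
  have hextRT : ∀ W V : Finset S, W ∈ M.C → under G W = ↑(R ∪ T) → under G V = ↑F →
      (∀ x ∈ V, ∀ y ∈ V, orbOf G x = orbOf G y → x = y) → W ∪ V ∈ M.C := by
    intro W V hWC hWu hVu htv
    refine grow V.card V le_rfl htv ?_ (R ∪ T) W Finset.subset_union_left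
      (Finset.union_subset hRsub Finset.subset_union_right) hWC hWu ?_
    · intro x hx; rw [← hVu]; exact mem_under.mpr ⟨x, hx, rfl⟩
    · intro x hx hmem
      have hxF : orbOf G x ∈ F := Finset.mem_coe.mp (by rw [← hVu]; exact mem_under.mpr ⟨x, hx, rfl⟩)
      rcases Finset.mem_union.mp (Finset.mem_coe.mp hmem) with hmem' | hmem'
      · exact Finset.disjoint_left.mp hRF hmem' hxF
      · exact Finset.disjoint_right.mp hFT hmem' hxF
  have hdisj2 : Disjoint (↑(R ∪ T) : Set (E G S)) (↑F : Set (E G S)) :=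
    Finset.disjoint_coe.mpr (Finset.disjoint_union_left.mpr ⟨hRF, hFT.symm⟩)
  have ctx2 : Ctx M (↑(R ∪ T)) (↑F) N := ⟨htl, hdisj2, hNfixRT', hNrevRT, hextRT⟩
  -- conclusion
  have e1 := card_mul M ctx1
  have e2 := card_mul M ctx2
  have hc1 : (↑(R ∪ F ∪ T) : Set (E G S)) = ↑(R ∪ T) ∪ ↑F := by
    rw [← Finset.coe_union, Finset.union_right_comm]
  have hc2 : (↑(R ∪ F) : Set (E G S)) = ↑R ∪ ↑F := Finset.coe_union _ _
  simp only [m_eq_card]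
  rw [hc1, hc2, e2, e1]
  ring
end

section
/- Let 𝔖 be an arithmetic cofinite G-semimatroid, let A∈𝒞̲, and let X,Y∈𝒞_A. Since, by normality and translativity, stab(x)=stab(y) whenever Gx=Gy, the groups Γ^X and Γ^Y coincide; call this group Γ^A. Then: (i) W(X) and W(Y) are conjugate subgroups of Γ^A; (ii) m_𝔖(A) equals the index [W(X) : h_X(G)] of the image of h_X in W(X). -/
open scoped Classical Pointwise


open GSemimatroid

/-- For a family `γ` of group elements indexed by orbits (representing an element of
`Γ^A = Π_{a ∈ A} Γ(a)`), the set `γ.X`. -/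
noncomputable def gammaSet (G : Type*) {S : Type*} [Group G] [MulAction G S]
    [DecidableEq S] (γ : GSemimatroid.E G S → G) (X : Finset S) : Finset S :=
  X.image (fun x => γ (GSemimatroid.orbOf G x) • x)

section Helpers

variable {G S : Type*} [Group G] [MulAction G S] [DecidableEq S]

private lemma orbOf_smul' (g : G) (x : S) : orbOf G (g • x) = orbOf G x :=
  Quotient.sound (MulAction.mem_orbit_iff.2 ⟨g, rfl⟩)

private lemma orbOf_eq_iff {x y : S} : orbOf G x = orbOf G y ↔ ∃ g : G, g • y = x := by
  constructor
  · intro h; exact MulAction.mem_orbit_iff.1 (Quotient.exact h)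
  · rintro ⟨g, rfl⟩; exact orbOf_smul' g y

private lemma eq_of_orbOf_eq (M : GSemimatroid G S) (htr : M.Translative)
    {X : Finset S} (hXC : X ∈ M.C) {x y : S} (hx : x ∈ X) (hy : y ∈ X)
    (h : orbOf G x = orbOf G y) : x = y := by
  obtain ⟨g, hg⟩ := orbOf_eq_iff.1 h
  have hsub : ({y, g • y} : Finset S) ⊆ X := by
    rw [hg]
    intro z hz
    simp only [Finset.mem_insert, Finset.mem_singleton] at hz
    rcases hz with rfl | rfl <;> assumption
  have h1 := htr g y (M.downClosed hXC hsub)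
  rw [← hg, h1]

private lemma under_gammaSet (γ : E G S → G) (X : Finset S) :
    under G (gammaSet G γ X) = under G X := by
  ext a
  simp only [under, gammaSet, Finset.coe_image, Set.image_image, Set.mem_image,
    Finset.mem_coe, orbOf_smul']

private lemma cenRel_equivalence (M : GSemimatroid G S) : Equivalence M.cenRel := by
  constructor
  · intro X
    exact ⟨1, by simp only [one_smul, Finset.image_id']⟩
  · rintro X Y ⟨g, hg⟩
    refine ⟨g⁻¹, ?_⟩
    rw [← hg, Finset.image_image]
    have hco : ((fun x : S => g⁻¹ • x) ∘ fun x => g • x) = id := by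
      funext x; simp [inv_smul_smul]
    rw [hco, Finset.image_id]
  · rintro X Y Z ⟨g, hg⟩ ⟨g', hg'⟩
    refine ⟨g' * g, ?_⟩
    rw [← hg', ← hg, Finset.image_image]
    apply Finset.image_congr
    intro x _
    simp only [Function.comp_apply, mul_smul]

private lemma pairing (M : GSemimatroid G S) (htr : M.Translative)
    {X Z : Finset S} (hXC : X ∈ M.C) (hZC : Z ∈ M.C)
    (hU : under G X = under G Z) : ∃ γ : E G S → G, gammaSet G γ X = Z := by
  classical
  set P : E G S → Prop := fun a =>
    ∃ g : G, ∃ x ∈ X, ∃ z ∈ Z, orbOf G x = a ∧ orbOf G z = a ∧ g • x = z with hP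
  refine ⟨fun a => if h : P a then h.choose else 1, ?_⟩
  ext b
  simp only [gammaSet, Finset.mem_image]
  constructor
  · rintro ⟨x, hx, rfl⟩
    have haX : orbOf G x ∈ under G Z := by
      rw [← hU]; exact ⟨x, hx, rfl⟩
    obtain ⟨z, hz, hza⟩ := haX
    obtain ⟨g, hg⟩ := orbOf_eq_iff.1 hza
    have hPa : P (orbOf G x) := ⟨g, x, hx, z, hz, rfl, hza, hg⟩
    obtain ⟨x', hx', z', hz', ha1, ha2, ha3⟩ := hPa.choose_spec
    have hx'x : x' = x := eq_of_orbOf_eq M htr hXC hx' hx ha1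
    subst hx'x
    rw [dif_pos hPa, ha3]
    exact hz'
  · intro hb
    have haZ : orbOf G b ∈ under G X := by
      rw [hU]; exact ⟨b, hb, rfl⟩
    obtain ⟨x, hx, hxa⟩ := haZ
    have hPa : P (orbOf G b) := by
      obtain ⟨g, hg⟩ := orbOf_eq_iff.1 hxa.symm
      exact ⟨g, x, hx, b, hb, hxa, rfl, hg⟩
    obtain ⟨x', hx', z', hz', ha1, ha2, ha3⟩ := hPa.choose_spec
    have hz'b : z' = b := eq_of_orbOf_eq M htr hZC hz' hb ha2
    refine ⟨x', hx', ?_⟩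
    rw [ha1, dif_pos hPa, ha3, hz'b]

private lemma Wmul (M : GSemimatroid G S) (har : M.Arithmetic) {X : Finset S}
    (hXC : X ∈ M.C) (f g : S → G)
    (hf : X.image (fun x => f x • x) ∈ M.C) (hg : X.image (fun x => g x • x) ∈ M.C) :
    X.image (fun x => (f x * g x) • x) ∈ M.C :=
  (har.2 hXC f g hf hg).1

private lemma Winv (M : GSemimatroid G S) (har : M.Arithmetic) {X : Finset S}
    (hXC : X ∈ M.C) (f : S → G)
    (hf : X.image (fun x => f x • x) ∈ M.C) :
    X.image (fun x => (f x)⁻¹ • x) ∈ M.C :=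
  (har.2 hXC f f hf hf).2

private lemma Wcongr (M : GSemimatroid G S) {X : Finset S} (f g : S → G)
    (h : ∀ x, f x = g x)
    (hf : X.image (fun x => f x • x) ∈ M.C) :
    X.image (fun x => g x • x) ∈ M.C := by
  have : f = g := funext h
  rwa [this] at hf

end Helpers

/-- For an arithmetic cofinite `G`-semimatroid and `X, Y ∈ 𝒞_A`
(identifying `Γ^X = Γ^Y = Γ^A` via equality of stabilizers, elements of `Γ^A` being
represented by families `γ : E → G` of group elements indexed by orbits):
(i) `W(X)` and `W(Y)` are conjugate subgroups of `Γ^A`;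
(ii) `m_𝔖(A) = [W(X) : h_X(G)]`, the index being the number of classes of elements of
`W(X)` modulo left translation by the diagonal image `h_X(G)`. -/
theorem arithmetic_W_conjugate_and_index
    {G S : Type*} [Group G] [MulAction G S] [DecidableEq S]
    (M : GSemimatroid G S) (hcof : M.Cofinite) (har : M.Arithmetic)
    (A : Set (E G S)) (hA : A ∈ M.CQ) (X Y : Finset S)
    (hX : X ∈ M.CA A) (hY : Y ∈ M.CA A) :
    (∃ c : E G S → G, ∀ γ : E G S → G,
      gammaSet G γ Y ∈ M.C ↔ gammaSet G (fun a => c a * γ a * (c a)⁻¹) X ∈ M.C) ∧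
    M.m A = Nat.card (Quot (fun γ δ : {γ : E G S → G // gammaSet G γ X ∈ M.C} =>
      ∃ g : G, ∀ x ∈ X, (g * γ.1 (orbOf G x)) • x = δ.1 (orbOf G x) • x)) := by
  have htr : M.Translative := har.1.1
  have hXC : X ∈ M.C := hX.1
  constructor
  · -- Part (i)
    obtain ⟨c, hc⟩ := pairing M htr hX.1 hY.1 (hX.2.trans hY.2.symm)
    refine ⟨c, fun γ => ?_⟩
    have E1 : gammaSet G γ Y =
        X.image (fun x => (γ (orbOf G x) * c (orbOf G x)) • x) := by
      ext b
      simp only [gammaSet, Finset.mem_image]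
      constructor
      · rintro ⟨y, hy, rfl⟩
        have hy' : y ∈ gammaSet G c X := by rw [hc]; exact hy
        obtain ⟨x, hx, rfl⟩ := Finset.mem_image.1 hy'
        exact ⟨x, hx, by rw [orbOf_smul', mul_smul]⟩
      · rintro ⟨x, hx, rfl⟩
        refine ⟨c (orbOf G x) • x, ?_, by rw [orbOf_smul', mul_smul]⟩
        rw [← hc]
        exact Finset.mem_image_of_mem _ hx
    have hcW : X.image (fun x => c (orbOf G x) • x) ∈ M.C := by
      have : X.image (fun x => c (orbOf G x) • x) = Y := hc
      rw [this]; exact hY.1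
    constructor
    · intro h
      rw [E1] at h
      have h2 := Wmul M har hXC _ _ hcW h
      have h3 := Wmul M har hXC _ _ h2 (Winv M har hXC _ hcW)
      have h4 := Wmul M har hXC _ _ h3 (Winv M har hXC _ hcW)
      show X.image (fun x =>
        (c (orbOf G x) * γ (orbOf G x) * (c (orbOf G x))⁻¹) • x) ∈ M.C
      exact Wcongr M _ _ (fun x => by group) h4
    · intro h
      have h0 : X.image (fun x =>
          (c (orbOf G x) * γ (orbOf G x) * (c (orbOf G x))⁻¹) • x) ∈ M.C := h
      have h1 := Wmul M har hXC _ _ (Winv M har hXC _ hcW) h0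
      have h2 := Wmul M har hXC _ _ h1 hcW
      have h3 := Wmul M har hXC _ _ h2 hcW
      rw [E1]
      exact Wcongr M _ _ (fun x => by group) h3
  · -- Part (ii)
    let r := fun γ δ : {γ : E G S → G // gammaSet G γ X ∈ M.C} =>
      ∃ g : G, ∀ x ∈ X, (g * γ.1 (orbOf G x)) • x = δ.1 (orbOf G x) • x
    show M.m A = Nat.card (Quot r)
    let F : {γ : E G S → G // gammaSet G γ X ∈ M.C} →
        {O : M.COrb // ∃ X' : M.Cen, under G X'.1 = A ∧ Quot.mk M.cenRel X' = O} :=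
      fun γ => ⟨Quot.mk M.cenRel ⟨gammaSet G γ.1 X, γ.2⟩,
        ⟨⟨gammaSet G γ.1 X, γ.2⟩, (under_gammaSet γ.1 X).trans hX.2, rfl⟩⟩
    have hsound : ∀ γ δ, r γ δ → F γ = F δ := by
      rintro γ δ ⟨g, hg⟩
      apply Subtype.ext
      apply Quot.sound
      refine ⟨g, ?_⟩
      show (gammaSet G γ.1 X).image (fun z => g • z) = gammaSet G δ.1 X
      unfold gammaSet
      rw [Finset.image_image]
      apply Finset.image_congr
      intro x hx
      simp only [Function.comp_apply]
      rw [smul_smul]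
      exact hg x hx
    have hinj : Function.Injective (Quot.lift F hsound) := by
      intro q₁ q₂
      induction q₁ using Quot.ind with | _ γ => ?_
      induction q₂ using Quot.ind with | _ δ => ?_
      intro h
      apply Quot.sound
      have h' : Quot.mk M.cenRel ⟨gammaSet G γ.1 X, γ.2⟩ =
          Quot.mk M.cenRel ⟨gammaSet G δ.1 X, δ.2⟩ := congrArg Subtype.val h
      obtain ⟨g, hg⟩ := ((cenRel_equivalence M).eqvGen_iff).1 (Quot.eqvGen_exact h')
      have hg' : (gammaSet G γ.1 X).image (fun z => g • z) = gammaSet G δ.1 X := hg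
      refine ⟨g, fun x hx => ?_⟩
      have hmem : (g * γ.1 (orbOf G x)) • x ∈ gammaSet G δ.1 X := by
        rw [← hg', ← smul_smul]
        exact Finset.mem_image_of_mem _ (Finset.mem_image_of_mem _ hx)
      obtain ⟨x', hx', hxx⟩ := Finset.mem_image.1 hmem
      have horb : orbOf G x' = orbOf G x := by
        have h2 := congrArg (orbOf G) hxx
        rwa [orbOf_smul', orbOf_smul'] at h2
      obtain rfl := eq_of_orbOf_eq M htr hXC hx' hx horb
      exact hxx.symm
    have hsurj : Function.Surjective (Quot.lift F hsound) := by
      rintro ⟨O, Z, hZA, rfl⟩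
      obtain ⟨γ, hγ⟩ := pairing M htr hXC Z.2 (hX.2.trans hZA.symm)
      refine ⟨Quot.mk r ⟨γ, by rw [hγ]; exact Z.2⟩, ?_⟩
      apply Subtype.ext
      show Quot.mk M.cenRel ⟨gammaSet G γ X, _⟩ = Quot.mk M.cenRel Z
      congr 1
      exact Subtype.ext hγ
    have hcard := Nat.card_eq_of_bijective (Quot.lift F hsound) ⟨hinj, hsurj⟩
    exact ((hcard.symm : Nat.card _ = Nat.card (Quot r)) : _)
end

section
/- Let 𝔖 be an arithmetic cofinite G-semimatroid. Then m_𝔖 satisfies the divisibility axiom (A.1.1): for every A∈𝒞̲ and a₀∈A with rk̲(A∖{a₀})=rk̲(A), the integer m_𝔖(A) divides m_𝔖(A∖{a₀}). -/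
open scoped Classical Pointwise


open GSemimatroid


section AuxA11

open GSemimatroid

namespace AuxA11

set_option linter.unusedSectionVars false

variable {G S : Type*} [Group G] [MulAction G S] [DecidableEq S]

lemma orbOf_smul (g : G) (x : S) : orbOf G (g • x) = orbOf G x :=
  Quot.sound (MulAction.orbitRel_apply.mpr (MulAction.mem_orbit x g))

lemma orbOf_eq_iff {x y : S} : orbOf G x = orbOf G y ↔ ∃ g : G, g • y = x := by
  constructor
  · intro h
    have h2 : x ∈ MulAction.orbit G y := Quotient.exact h
    exact MulAction.mem_orbit_iff.mp h2
  · rintro ⟨g, rfl⟩; exact orbOf_smul g y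

lemma mem_under {X : Finset S} {a : E G S} :
    a ∈ under G X ↔ ∃ x ∈ X, orbOf G x = a := by
  simp [under, Set.mem_image]

lemma under_mono {X Y : Finset S} (h : X ⊆ Y) : under G X ⊆ under G Y :=
  Set.image_mono (by exact_mod_cast h)

/-- `act X γ` : the set `{γ x • x : x ∈ X}`. -/
noncomputable def act (X : Finset S) (γ : S → G) : Finset S :=
  X.image fun x => γ x • x

lemma under_act (X : Finset S) (γ : S → G) : under G (act X γ) = under G X := by
  unfold act under
  rw [Finset.coe_image, ← Set.image_comp]
  exact Set.image_congr fun x _ => orbOf_smul (γ x) x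

lemma act_one (X : Finset S) : act X (1 : S → G) = X := by
  simp [act]

lemma act_const (X : Finset S) (g : G) : act X (fun _ => g) = X.image (g • ·) := rfl

lemma act_smul_image (X : Finset S) (g : G) (γ : S → G) :
    (act X γ).image (g • ·) = act X ((fun _ => g) * γ) := by
  unfold act
  rw [Finset.image_image]
  exact Finset.image_congr fun x _ => by simp [mul_smul]

end AuxA11

end AuxA11

section AuxB

open GSemimatroid

namespace AuxA11

set_option linter.unusedSectionVars false

variable {G S : Type*} [Group G] [MulAction G S] [DecidableEq S]
variable (M : GSemimatroid G S)

lemma orbit_inj (htr : M.Translative) {X : Finset S} (hX : X ∈ M.C)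
    {x y : S} (hx : x ∈ X) (hy : y ∈ X) (h : orbOf G x = orbOf G y) : x = y := by
  obtain ⟨g, hg⟩ := orbOf_eq_iff.mp h
  subst hg
  have hsub : ({y, g • y} : Finset S) ⊆ X := by
    intro z hz
    rcases Finset.mem_insert.mp hz with rfl | hz
    · exact hy
    · rcases Finset.mem_singleton.mp hz with rfl
      exact hx
  exact htr g y (M.downClosed hX hsub)

lemma rk_le_of_under_subset (htr : M.Translative) {X Y : Finset S}
    (hX : X ∈ M.C) (hY : Y ∈ M.C) (h : under G X ⊆ under G Y) :
    M.rk X ≤ M.rk Y := by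
  by_contra hlt
  push_neg at hlt
  obtain ⟨y, hyX, hyY, hins⟩ := M.cr2 hY hX hlt
  have hmem : orbOf G y ∈ under G Y := h (mem_under.mpr ⟨y, hyX, rfl⟩)
  obtain ⟨y', hy', he⟩ := mem_under.mp hmem
  have : y' = y := orbit_inj M htr hins (Finset.mem_insert_of_mem hy')
    (Finset.mem_insert_self _ _) he
  exact hyY (this ▸ hy')

lemma rkQ_eq_rk (htr : M.Translative) {X : Finset S} (hX : X ∈ M.C) :
    M.rkQ (under G X) = M.rk X := by
  have hub : ∀ n ∈ {n : ℕ | ∃ X' ∈ M.C, under G X' ⊆ under G X ∧ M.rk X' = n},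
      n ≤ M.rk X := by
    rintro n ⟨X', hX', hsub, rfl⟩
    exact rk_le_of_under_subset M htr hX' hX hsub
  have hmem : M.rk X ∈ {n : ℕ | ∃ X' ∈ M.C, under G X' ⊆ under G X ∧ M.rk X' = n} :=
    ⟨X, hX, subset_rfl, rfl⟩
  exact le_antisymm (csSup_le ⟨_, hmem⟩ hub) (le_csSup ⟨_, hub⟩ hmem)

lemma act_eq_iff (htr : M.Translative) {X₀ : Finset S} (hX₀ : X₀ ∈ M.C)
    {γ δ : S → G} :
    act X₀ γ = act X₀ δ ↔ ∀ x ∈ X₀, γ x • x = δ x • x := by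
  constructor
  · intro h x hx
    have hmem : γ x • x ∈ act X₀ δ := h ▸ Finset.mem_image_of_mem _ hx
    obtain ⟨y, hy, he⟩ := Finset.mem_image.mp hmem
    have horb : orbOf G y = orbOf G x := by
      have h1 : orbOf G (δ y • y) = orbOf G y := orbOf_smul _ _
      have h2 : orbOf G (γ x • x) = orbOf G x := orbOf_smul _ _
      rw [← h1, he, h2]
    have : y = x := orbit_inj M htr hX₀ hy hx horb
    subst this
    exact he.symm
  · intro h
    exact Finset.image_congr fun x hx => h x hx

lemma exists_act (htr : M.Translative) {X₀ X : Finset S} (hX₀ : X₀ ∈ M.C)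
    (hX : X ∈ M.C) (h : under G X = under G X₀) :
    ∃ γ : S → G, act X₀ γ = X := by
  haveI : Inhabited G := ⟨1⟩
  have hex : ∀ x : S, x ∈ X₀ → ∃ g : G, g • x ∈ X := by
    intro x hx
    have : orbOf G x ∈ under G X := h ▸ mem_under.mpr ⟨x, hx, rfl⟩
    obtain ⟨y, hy, he⟩ := mem_under.mp this
    obtain ⟨g, hg⟩ := orbOf_eq_iff.mp he
    exact ⟨g, hg ▸ hy⟩
  choose! γ hγ using hex
  refine ⟨γ, Finset.Subset.antisymm ?_ ?_⟩
  · intro z hz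
    obtain ⟨x, hx, rfl⟩ := Finset.mem_image.mp hz
    exact hγ x hx
  · intro y hy
    have : orbOf G y ∈ under G X₀ := h ▸ mem_under.mpr ⟨y, hy, rfl⟩
    obtain ⟨x, hx, he⟩ := mem_under.mp this
    have h1 : γ x • x ∈ X := hγ x hx
    have h2 : orbOf G (γ x • x) = orbOf G y := by rw [orbOf_smul, he]
    have := orbit_inj M htr hX h1 hy h2
    exact this ▸ Finset.mem_image_of_mem _ hx

end AuxA11

end AuxB

section AuxC

open GSemimatroid

namespace AuxA11

set_option linter.unusedSectionVars false

variable {G S : Type*} [Group G] [MulAction G S] [DecidableEq S]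
variable (M : GSemimatroid G S)

/-- If `a` and `b` move `x` the same way, they move every point of the orbit of `x`
the same way (uses normality of stabilizers). -/
lemma smul_point_congr (hnor : M.Normal) {a b : G} {x : S} (hab : a • x = b • x)
    (k : G) : a • (k • x) = b • (k • x) := by
  have hn : b⁻¹ * a ∈ MulAction.stabilizer G x := by
    have : (b⁻¹ * a) • x = x := by rw [mul_smul, hab, inv_smul_smul]
    exact this
  have hn2 : k⁻¹ * (b⁻¹ * a) * k ∈ MulAction.stabilizer G x :=
    (hnor x).conj_mem' _ hn k
  have hx : (k⁻¹ * (b⁻¹ * a) * k) • x = x := hn2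
  have key : (b⁻¹ * a) • (k • x) = k • x := by
    have h1 : (b⁻¹ * a) • (k • x) = k • ((k⁻¹ * (b⁻¹ * a) * k) • x) := by
      simp [mul_smul]
    rw [h1, hx]
  calc a • (k • x) = (b * (b⁻¹ * a)) • (k • x) := by group
    _ = b • ((b⁻¹ * a) • (k • x)) := by rw [mul_smul]
    _ = b • (k • x) := by rw [key]

lemma smul_point_mul (hnor : M.Normal) {a b c d : G} {x : S}
    (h1 : a • x = b • x) (h2 : c • x = d • x) : (a * c) • x = (b * d) • x := by
  rw [mul_smul, mul_smul, h2]
  exact smul_point_congr M hnor h1 d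

lemma smul_point_inv (hnor : M.Normal) {a b : G} {x : S}
    (h : a • x = b • x) : a⁻¹ • x = b⁻¹ • x := by
  have hn : a⁻¹ * b ∈ MulAction.stabilizer G x := by
    have : (a⁻¹ * b) • x = x := by rw [mul_smul, ← h, inv_smul_smul]
    exact this
  have hc : b * (a⁻¹ * b) * b⁻¹ ∈ MulAction.stabilizer G x :=
    (hnor x).conj_mem _ hn b
  have hx2 : (b * (a⁻¹ * b) * b⁻¹) • x = x := hc
  have hba : (b * a⁻¹) • x = x := by
    have he : b * (a⁻¹ * b) * b⁻¹ = b * a⁻¹ := by group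
    rwa [he] at hx2
  calc a⁻¹ • x = b⁻¹ • ((b * a⁻¹) • x) := by rw [mul_smul, inv_smul_smul]
    _ = b⁻¹ • x := by rw [hba]

/-- The subgroup `W(X₀)` of `S → G`. -/
noncomputable def Wgrp (har : M.Arithmetic) {X₀ : Finset S} (hX₀ : X₀ ∈ M.C) :
    Subgroup (S → G) where
  carrier := {γ | act X₀ γ ∈ M.C}
  one_mem' := by
    show act X₀ (1 : S → G) ∈ M.C
    rw [act_one]; exact hX₀
  mul_mem' := by
    intro a b ha hb
    have := (har.2 hX₀ a b ha hb).1
    show X₀.image (fun x => (a * b) x • x) ∈ M.C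
    simpa [Pi.mul_apply] using this
  inv_mem' := by
    intro a ha
    have := (har.2 hX₀ a a ha ha).2
    show X₀.image (fun x => a⁻¹ x • x) ∈ M.C
    simpa [Pi.inv_apply] using this

/-- The subgroup `H(X₀)` : pointwise equal on `X₀` to a global translation. -/
noncomputable def Hgrp (hnor : M.Normal) (X₀ : Finset S) : Subgroup (S → G) where
  carrier := {γ | ∃ g : G, ∀ x ∈ X₀, γ x • x = g • x}
  one_mem' := ⟨1, fun x _ => rfl⟩
  mul_mem' := by
    rintro a b ⟨ga, ha⟩ ⟨gb, hb⟩
    exact ⟨ga * gb, fun x hx =>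
      smul_point_mul M hnor (ha x hx) (hb x hx)⟩
  inv_mem' := by
    rintro a ⟨g, ha⟩
    exact ⟨g⁻¹, fun x hx => smul_point_inv M hnor (ha x hx)⟩

/-- The subgroup `K(Y₀)` of maps that fix `Y₀` pointwise. -/
noncomputable def Kgrp (Y₀ : Finset S) : Subgroup (S → G) where
  carrier := {γ | ∀ x ∈ Y₀, γ x • x = x}
  one_mem' := fun x _ => one_smul _ _
  mul_mem' := by
    intro a b ha hb x hx
    show (a x * b x) • x = x
    rw [mul_smul, hb x hx, ha x hx]
  inv_mem' := by
    intro a ha x hx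
    show (a x)⁻¹ • x = x
    calc (a x)⁻¹ • x = (a x)⁻¹ • (a x • x) := by rw [ha x hx]
      _ = x := inv_smul_smul _ _

lemma Kgrp_normal (hnor : M.Normal) (Y₀ : Finset S) : (Kgrp (S := S) (G := G) Y₀).Normal := by
  constructor
  intro n hn g x hx
  show (g x * n x * (g x)⁻¹) • x = x
  have h1 : n x • x = (1 : G) • x := by rw [hn x hx, one_smul]
  have h2 : n x • ((g x)⁻¹ • x) = (g x)⁻¹ • x := by
    have := smul_point_congr M hnor h1 (g x)⁻¹
    rwa [one_smul] at this
  rw [mul_smul, mul_smul, h2, smul_inv_smul]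

end AuxA11

end AuxC

section AuxD

open GSemimatroid

namespace AuxA11

set_option linter.unusedSectionVars false

variable {G S : Type*} [Group G] [MulAction G S] [DecidableEq S]
variable (M : GSemimatroid G S)

lemma cenRel_equivalence : Equivalence M.cenRel := by
  constructor
  · intro X
    exact ⟨1, by simp⟩
  · rintro X Y ⟨g, h⟩
    refine ⟨g⁻¹, ?_⟩
    rw [← h, Finset.image_image]
    simp [Function.comp_def]
  · rintro X Y Z ⟨g, hg⟩ ⟨h, hh⟩
    refine ⟨h * g, ?_⟩
    rw [← hh, ← hg, Finset.image_image]
    exact Finset.image_congr fun x _ => (mul_smul h g x)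

lemma mk_eq_iff {X Y : M.Cen} :
    Quot.mk M.cenRel X = Quot.mk M.cenRel Y ↔ M.cenRel X Y :=
  Quot.eq.trans ((cenRel_equivalence M).eqvGen_iff)

lemma m_eq_relindex (har : M.Arithmetic) {X₀ : Finset S} (hX₀ : X₀ ∈ M.C) :
    M.m (under G X₀) = (Hgrp M har.1.2 X₀).relIndex (Wgrp M har hX₀) := by
  classical
  have htr : M.Translative := har.1.1
  have hnor : M.Normal := har.1.2
  set W := Wgrp M har hX₀ with hW
  set HH := Hgrp M har.1.2 X₀ with hHH
  set Hs := HH.subgroupOf W with hHs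
  have hactC : ∀ w : W, act X₀ (w : S → G) ∈ M.C := fun w => w.2
  set T := {O : M.COrb // ∃ X : M.Cen, under G X.1 = under G X₀ ∧
    Quot.mk M.cenRel X = O} with hT
  set f : W → T := fun w =>
    ⟨Quot.mk M.cenRel ⟨act X₀ (w : S → G), hactC w⟩,
      ⟨⟨act X₀ (w : S → G), hactC w⟩, under_act _ _, rfl⟩⟩ with hfdef
  have hf : ∀ v w : W, f v = f w ↔
      ((w : S → G) * (v : S → G)⁻¹) ∈ HH := by
    intro v w
    have h1 : f v = f w ↔ M.cenRel ⟨act X₀ (v : S → G), hactC v⟩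
        ⟨act X₀ (w : S → G), hactC w⟩ := by
      rw [Subtype.ext_iff]
      exact mk_eq_iff M
    rw [h1]
    constructor
    · rintro ⟨g, hg⟩
      have hg' : act X₀ ((fun _ => g) * (v : S → G)) = act X₀ (w : S → G) := by
        rw [← act_smul_image]; exact hg
      have hp := (act_eq_iff M htr hX₀).mp hg'
      refine ⟨g, fun x hx => ?_⟩
      have hpx : (g * (v : S → G) x) • x = (w : S → G) x • x := by
        have := hp x hx
        simpa [Pi.mul_apply] using this
      have h2 := smul_point_mul M hnor hpx.symm
        (rfl : ((v : S → G) x)⁻¹ • x = ((v : S → G) x)⁻¹ • x)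
      have h3 : ((w : S → G) x * ((v : S → G) x)⁻¹) • x
          = (g * (v : S → G) x * ((v : S → G) x)⁻¹) • x := h2
      rw [mul_inv_cancel_right] at h3
      simpa [Pi.mul_apply, Pi.inv_apply] using h3
    · rintro ⟨g, hg⟩
      refine ⟨g, ?_⟩
      rw [act_smul_image]
      refine (act_eq_iff M htr hX₀).mpr fun x hx => ?_
      have hgx : ((w : S → G) x * ((v : S → G) x)⁻¹) • x = g • x := by
        have := hg x hx
        simpa [Pi.mul_apply, Pi.inv_apply] using this
      have h2 := smul_point_mul M hnor hgx
        (rfl : (v : S → G) x • x = (v : S → G) x • x)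
      have h3 : ((w : S → G) x * ((v : S → G) x)⁻¹ * (v : S → G) x) • x
          = (g * (v : S → G) x) • x := h2
      rw [inv_mul_cancel_right] at h3
      simpa [Pi.mul_apply] using h3.symm
  -- the induced map on the coset space
  set Fq : W ⧸ Hs → T := fun q => Quotient.liftOn' q (fun w => f w⁻¹) (by
    intro a b hab
    have h1 : a⁻¹ * b ∈ Hs := QuotientGroup.leftRel_apply.mp hab
    have h2 : ((a : S → G))⁻¹ * (b : S → G) ∈ HH := by
      have := Subgroup.mem_subgroupOf.mp h1
      simpa using this
    have h3 : ((b : S → G))⁻¹ * (a : S → G) ∈ HH := by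
      have := HH.inv_mem h2
      simpa using this
    refine (hf a⁻¹ b⁻¹).mpr ?_
    simpa using h3) with hFq
  have hFq_mk : ∀ w : W, Fq (Quotient.mk'' w) = f w⁻¹ := fun w => rfl
  have hinj : Function.Injective Fq := by
    intro q q'
    induction q using Quotient.ind'
    induction q' using Quotient.ind'
    rename_i a b
    intro h
    rw [hFq_mk, hFq_mk] at h
    have h2 := (hf a⁻¹ b⁻¹).mp h
    have h3 : ((b : S → G))⁻¹ * (a : S → G) ∈ HH := by simpa using h2
    have h4 : ((a : S → G))⁻¹ * (b : S → G) ∈ HH := by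
      have := HH.inv_mem h3
      simpa using this
    apply Quotient.sound'
    rw [QuotientGroup.leftRel_apply]
    exact Subgroup.mem_subgroupOf.mpr (by simpa using h4)
  have hsurj : Function.Surjective Fq := by
    rintro ⟨O, X, hu, hmk⟩
    obtain ⟨γ, hγ⟩ := exists_act M htr hX₀ X.2 hu
    have hγW : γ ∈ W := by
      show act X₀ γ ∈ M.C
      rw [hγ]; exact X.2
    refine ⟨Quotient.mk'' (⟨γ, hγW⟩ : W)⁻¹, ?_⟩
    rw [hFq_mk, inv_inv]
    apply Subtype.ext
    show Quot.mk M.cenRel ⟨act X₀ γ, _⟩ = O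
    rw [← hmk]
    congr 1
    exact Subtype.ext hγ
  have hcard : M.m (under G X₀) = Nat.card T := rfl
  rw [hcard, ← Nat.card_eq_of_bijective Fq ⟨hinj, hsurj⟩]
  rw [Subgroup.relIndex, Subgroup.index_eq_card]

end AuxA11

end AuxD

section AuxE

open GSemimatroid

namespace AuxA11

set_option linter.unusedSectionVars false

variable {G S : Type*} [Group G] [MulAction G S] [DecidableEq S]
variable (M : GSemimatroid G S)

lemma mem_Wgrp (har : M.Arithmetic) {X₀ : Finset S} (hX₀ : X₀ ∈ M.C) {γ : S → G} :
    γ ∈ Wgrp M har hX₀ ↔ act X₀ γ ∈ M.C := Iff.rfl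

lemma mem_Hgrp (hnor : M.Normal) (X₀ : Finset S) {γ : S → G} :
    γ ∈ Hgrp M hnor X₀ ↔ ∃ g : G, ∀ x ∈ X₀, γ x • x = g • x := Iff.rfl

lemma mem_Kgrp (Y₀ : Finset S) {γ : S → G} :
    γ ∈ Kgrp (G := G) Y₀ ↔ ∀ x ∈ Y₀, γ x • x = x := Iff.rfl

end AuxA11

end AuxE

/-- For an arithmetic cofinite `G`-semimatroid, the multiplicity
function satisfies the divisibility axiom (A.1.1): if `rk̲(A \ {a₀}) = rk̲ A` then
`m_𝔖(A) ∣ m_𝔖(A \ {a₀})`. -/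
theorem arithmetic_divisibility_A11
    {G S : Type*} [Group G] [MulAction G S] [DecidableEq S]
    (M : GSemimatroid G S) (hcof : M.Cofinite) (har : M.Arithmetic) :
    ∀ A : Set (E G S), A ∈ M.CQ → ∀ a₀ ∈ A,
      M.rkQ (A \ {a₀}) = M.rkQ A → M.m A ∣ M.m (A \ {a₀}) := by
  classical
  intro A hA a₀ ha₀ hrk
  have htr : M.Translative := har.1.1
  have hnor : M.Normal := har.1.2
  obtain ⟨X₀, hX₀, rfl⟩ := hA
  set Y₀ : Finset S := X₀.filter (fun x => orbOf G x ≠ a₀) with hY₀def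
  have hY₀sub : Y₀ ⊆ X₀ := Finset.filter_subset _ _
  have hY₀C : Y₀ ∈ M.C := M.downClosed hX₀ hY₀sub
  have hY₀u : under G Y₀ = under G X₀ \ {a₀} := by
    ext a
    simp only [Set.mem_diff, Set.mem_singleton_iff, AuxA11.mem_under]
    constructor
    · rintro ⟨x, hx, rfl⟩
      obtain ⟨hx1, hx2⟩ := Finset.mem_filter.mp hx
      exact ⟨⟨x, hx1, rfl⟩, hx2⟩
    · rintro ⟨⟨x, hx, rfl⟩, hne⟩
      exact ⟨x, Finset.mem_filter.mpr ⟨hx, hne⟩, rfl⟩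
  set WA := AuxA11.Wgrp M har hX₀ with hWAdef
  set WB := AuxA11.Wgrp M har hY₀C with hWBdef
  set HA := AuxA11.Hgrp M har.1.2 X₀ with hHAdef
  set HB := AuxA11.Hgrp M har.1.2 Y₀ with hHBdef
  set K := AuxA11.Kgrp (G := G) Y₀ with hKdef
  haveI hKN : K.Normal := AuxA11.Kgrp_normal M hnor Y₀
  set U := WA ⊔ K with hUdef
  have hWAU : WA ≤ U := le_sup_left
  have hKU : K ≤ U := le_sup_right
  -- basic inclusions
  have hWAB : WA ≤ WB := by
    intro γ hγ
    refine M.downClosed hγ ?_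
    exact Finset.image_subset_image hY₀sub
  have hKW : K ≤ WB := by
    intro γ hγ
    have : AuxA11.act Y₀ γ = Y₀ := by
      refine Eq.trans (Finset.image_congr fun x hx => hγ x hx) ?_
      exact Finset.image_id
    show AuxA11.act Y₀ γ ∈ M.C
    rw [this]; exact hY₀C
  have hUWB : U ≤ WB := sup_le hWAB hKW
  have hKH : K ≤ HB := fun γ hγ =>
    ⟨1, fun x hx => by rw [hγ x hx, one_smul]⟩
  have hconstWA : ∀ g : G, (fun _ : S => g) ∈ WA := by
    intro g
    show AuxA11.act X₀ (fun _ => g) ∈ M.C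
    rw [AuxA11.act_const]
    exact M.smul_mem g hX₀
  have hHBU : HB ≤ U := by
    rintro γ ⟨g, hg⟩
    have hk : (fun _ : S => g)⁻¹ * γ ∈ K := by
      intro x hx
      show (g⁻¹ * γ x) • x = x
      rw [mul_smul, hg x hx, inv_smul_smul]
    have hdecomp : γ = (fun _ : S => g) * ((fun _ : S => g)⁻¹ * γ) := by
      group
    rw [hdecomp]
    exact mul_mem (hWAU (hconstWA g)) (hKU hk)
  have hHAHB : HA ≤ HB := by
    rintro γ ⟨g, hg⟩
    exact ⟨g, fun x hx => hg x (hY₀sub hx)⟩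
  -- the key claim, using the rank hypothesis
  have hkey : ∀ γ : S → G, γ ∈ WA → γ ∈ HB → γ ∈ HA := by
    rintro γ hγW ⟨g, hg⟩
    have hXC : AuxA11.act X₀ γ ∈ M.C := hγW
    have hX'C : X₀.image (g • ·) ∈ M.C := M.smul_mem g hX₀
    have hZC : AuxA11.act Y₀ γ ∈ M.C :=
      M.downClosed hXC (Finset.image_subset_image hY₀sub)
    have hZX : AuxA11.act Y₀ γ ⊆ AuxA11.act X₀ γ :=
      Finset.image_subset_image hY₀sub
    have hZX' : AuxA11.act Y₀ γ ⊆ X₀.image (g • ·) := by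
      intro z hz
      obtain ⟨x, hx, rfl⟩ := Finset.mem_image.mp hz
      rw [hg x hx]
      exact Finset.mem_image_of_mem _ (hY₀sub hx)
    have hInterC : AuxA11.act X₀ γ ∩ X₀.image (g • ·) ∈ M.C :=
      M.downClosed hXC Finset.inter_subset_left
    -- ranks
    have hrkX : M.rkQ (under G X₀) = M.rk (AuxA11.act X₀ γ) := by
      have := AuxA11.rkQ_eq_rk M htr hXC
      rwa [AuxA11.under_act] at this
    have hrkZ : M.rkQ (under G X₀ \ {a₀}) = M.rk (AuxA11.act Y₀ γ) := by
      have := AuxA11.rkQ_eq_rk M htr hZC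
      rwa [AuxA11.under_act, hY₀u] at this
    have hZXeq : M.rk (AuxA11.act Y₀ γ) = M.rk (AuxA11.act X₀ γ) := by
      rw [← hrkZ, ← hrkX, hrk]
    have hmono1 : M.rk (AuxA11.act Y₀ γ) ≤
        M.rk (AuxA11.act X₀ γ ∩ X₀.image (g • ·)) :=
      M.r2 hZC hInterC (Finset.subset_inter hZX hZX')
    have hmono2 : M.rk (AuxA11.act X₀ γ ∩ X₀.image (g • ·)) ≤
        M.rk (AuxA11.act X₀ γ) :=
      M.r2 hInterC hXC Finset.inter_subset_left
    have heq : M.rk (AuxA11.act X₀ γ) =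
        M.rk (AuxA11.act X₀ γ ∩ X₀.image (g • ·)) :=
      le_antisymm (hZXeq ▸ hmono1) hmono2
    have hUC : AuxA11.act X₀ γ ∪ X₀.image (g • ·) ∈ M.C :=
      M.cr1 hXC hX'C heq
    refine ⟨g, fun x hx => ?_⟩
    have h1 : γ x • x ∈ AuxA11.act X₀ γ ∪ X₀.image (g • ·) :=
      Finset.mem_union_left _ (Finset.mem_image_of_mem _ hx)
    have h2 : g • x ∈ AuxA11.act X₀ γ ∪ X₀.image (g • ·) :=
      Finset.mem_union_right _ (Finset.mem_image_of_mem _ hx)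
    exact AuxA11.orbit_inj M htr hUC h1 h2
      (by rw [AuxA11.orbOf_smul, AuxA11.orbOf_smul])
  -- relindex equality via an explicit bijection of coset spaces
  have hrel : HA.relIndex WA = HB.relIndex U := by
    set φ : WA ⧸ (HA.subgroupOf WA) → U ⧸ (HB.subgroupOf U) :=
      Quotient.map' (fun w : WA => (⟨w.1, hWAU w.2⟩ : U)) (by
        intro a b hab
        rw [QuotientGroup.leftRel_apply] at hab
        have h1 : (a : S → G)⁻¹ * (b : S → G) ∈ HA := by
          have := Subgroup.mem_subgroupOf.mp hab
          simpa using this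
        show QuotientGroup.leftRel (HB.subgroupOf U) _ _
        rw [QuotientGroup.leftRel_apply]
        refine Subgroup.mem_subgroupOf.mpr ?_
        simpa using hHAHB h1) with hφdef
    have hφ_mk : ∀ w : WA, φ (Quotient.mk'' w) =
        Quotient.mk'' (⟨w.1, hWAU w.2⟩ : U) := fun w => rfl
    have hinj : Function.Injective φ := by
      intro q q'
      induction q using Quotient.ind'
      induction q' using Quotient.ind'
      rename_i a b
      intro h
      rw [hφ_mk, hφ_mk] at h
      have h1 := Quotient.exact' h
      rw [QuotientGroup.leftRel_apply] at h1
      have h2 : (a : S → G)⁻¹ * (b : S → G) ∈ HB := by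
        have := Subgroup.mem_subgroupOf.mp h1
        simpa using this
      have h3 : (a : S → G)⁻¹ * (b : S → G) ∈ WA :=
        mul_mem (inv_mem a.2) b.2
      apply Quotient.sound'
      rw [QuotientGroup.leftRel_apply]
      exact Subgroup.mem_subgroupOf.mpr (by simpa using hkey _ h3 h2)
    have hsurj : Function.Surjective φ := by
      intro q
      induction q using Quotient.ind'
      rename_i u
      have hu : (u : S → G) ∈ (WA : Set (S → G)) * (K : Set (S → G)) := by
        rw [← Subgroup.mul_normal WA K]
        exact u.2
      obtain ⟨w, hw, k, hk, hwk⟩ := hu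
      refine ⟨Quotient.mk'' ⟨w, hw⟩, ?_⟩
      rw [hφ_mk]
      apply Quotient.sound'
      rw [QuotientGroup.leftRel_apply]
      refine Subgroup.mem_subgroupOf.mpr ?_
      have hthis : (((⟨(⟨w, hw⟩ : WA).1, hWAU hw⟩ : U)⁻¹ * u : U) : S → G) = k := by
        simp only [Subgroup.coe_mul, InvMemClass.coe_inv]
        show w⁻¹ * (u : S → G) = k
        have h4 : (u : S → G) = w * k := hwk.symm
        rw [h4, inv_mul_cancel_left]
      rw [hthis]
      exact hKH hk
    rw [Subgroup.relIndex, Subgroup.relIndex, Subgroup.index_eq_card,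
      Subgroup.index_eq_card]
    exact Nat.card_eq_of_bijective φ ⟨hinj, hsurj⟩
  -- final assembly
  have h1 : M.m (under G X₀) = HA.relIndex WA := AuxA11.m_eq_relindex M har hX₀
  have h2 : M.m (under G X₀ \ {a₀}) = HB.relIndex WB := by
    rw [← hY₀u]
    exact AuxA11.m_eq_relindex M har hY₀C
  rw [h1, h2, hrel]
  exact ⟨U.relIndex WB, (Subgroup.relIndex_mul_relIndex HB U WB hHBU hUWB).symm⟩
end

section
/- Let 𝔖 be a translative cofinite G-semimatroid and let r:=rk̲(E_𝔖). Then T_𝔖(x,y) = Σ_{GX∈𝒞/G} (x−1)^{r−rk(X)}·(y−1)^{|X|−rk(X)}; that is, the Tutte polynomial of 𝔖 equals the corank-nullity polynomial s(𝒞_𝔖;u,v):=Σ_{GX∈𝒞/G} u^{r−rk(X)} v^{|X|−rk(X)} of the orbit set 𝒞_𝔖=𝒞/G evaluated at u=x−1, v=y−1. -/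
open scoped Classical Pointwise


open GSemimatroid

namespace GSemimatroid

variable {G S : Type*} [Group G] [MulAction G S] [DecidableEq S]

/-- The rank of an orbit of central sets. -/
def corbRk (M : GSemimatroid G S) : M.COrb → ℕ :=
  Quot.lift (fun X => M.rk X.1) (by
    rintro X Y ⟨g, hg⟩
    try dsimp only
    rw [← hg]
    exact (M.rk_smul g X.2).symm)

/-- The cardinality of (any representative of) an orbit of central sets. -/
def corbCard (M : GSemimatroid G S) : M.COrb → ℕ :=
  Quot.lift (fun X => X.1.card) (by
    rintro X Y ⟨g, hg⟩
    try dsimp only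
    rw [← hg, Finset.card_image_of_injective _ (MulAction.injective g)])

end GSemimatroid

namespace GSemimatroid

variable {G S : Type*} [Group G] [MulAction G S] [DecidableEq S]

lemma orbOf_smul (g : G) (x : S) : orbOf G (g • x) = orbOf G x :=
  Quotient.sound (MulAction.mem_orbit x g)

lemma under_image_smul (g : G) (X : Finset S) :
    under G (X.image (g • ·)) = under G X := by
  unfold under
  rw [Finset.coe_image, ← Set.image_comp]
  simp [Function.comp_def, orbOf_smul]

/-- The underlying orbit-set of an orbit of central sets. -/
def uA (M : GSemimatroid G S) : M.COrb → Set (E G S) :=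
  Quot.lift (fun X => under G X.1) (by
    rintro X Y ⟨g, hg⟩
    rw [← hg, under_image_smul])

lemma injOn_orbOf (M : GSemimatroid G S) (htr : M.Translative)
    {X : Finset S} (hX : X ∈ M.C) : Set.InjOn (orbOf G) (X : Set S) := by
  intro a ha b hb hab
  obtain ⟨g, hg0⟩ : a ∈ MulAction.orbit G b := Quotient.eq''.mp hab
  have hg : g • b = a := hg0
  have hmem : ({b, g • b} : Finset S) ∈ M.C := by
    apply M.downClosed hX
    intro z hz
    simp only [Finset.mem_insert, Finset.mem_singleton] at hz
    rcases hz with rfl | rfl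
    · exact hb
    · rw [hg]; exact ha
  have := htr g b hmem
  rw [← hg, this]

lemma card_under (M : GSemimatroid G S) (htr : M.Translative)
    {X : Finset S} (hX : X ∈ M.C) : Nat.card (under G X) = X.card := by
  rw [Nat.card_coe_set_eq]
  unfold under
  rw [Set.ncard_image_of_injOn (M.injOn_orbOf htr hX), Set.ncard_coe_finset]

lemma rk_le_of_under_subset (M : GSemimatroid G S) (htr : M.Translative)
    {X Y : Finset S} (hX : X ∈ M.C) (hY : Y ∈ M.C)
    (hsub : under G Y ⊆ under G X) : M.rk Y ≤ M.rk X := by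
  by_contra h
  push_neg at h
  obtain ⟨yy, hyY, hyX, hins⟩ := M.cr2 hX hY h
  have : orbOf G yy ∈ under G X := hsub ⟨yy, hyY, rfl⟩
  obtain ⟨xx, hxX, hxy⟩ := this
  obtain ⟨g, hg0⟩ : yy ∈ MulAction.orbit G xx := Quotient.eq''.mp hxy.symm
  have hg : g • xx = yy := hg0
  have hmem : ({xx, g • xx} : Finset S) ∈ M.C := by
    apply M.downClosed hins
    intro z hz
    simp only [Finset.mem_insert, Finset.mem_singleton] at hz
    rcases hz with rfl | rfl
    · exact Finset.mem_insert_of_mem hxX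
    · rw [hg]; exact Finset.mem_insert_self _ _
  have := htr g xx hmem
  exact hyX (by rw [← hg, this]; exact hxX)

lemma rkQ_under (M : GSemimatroid G S) (htr : M.Translative)
    {X : Finset S} (hX : X ∈ M.C) : M.rkQ (under G X) = M.rk X := by
  unfold rkQ
  apply le_antisymm
  · refine csSup_le ⟨M.rk X, X, hX, subset_rfl, rfl⟩ ?_
    rintro n ⟨Y, hY, hsub, rfl⟩
    exact M.rk_le_of_under_subset htr hX hY hsub
  · apply le_csSup
    · refine ⟨M.rk X, ?_⟩
      rintro n ⟨Y, hY, hsub, rfl⟩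
      exact M.rk_le_of_under_subset htr hX hY hsub
    · exact ⟨X, hX, subset_rfl, rfl⟩

end GSemimatroid

/-- For a translative cofinite `G`-semimatroid, the Tutte polynomial
equals the corank–nullity polynomial of the orbit set `𝒞_𝔖 = 𝒞/G`, evaluated at
`u = x - 1`, `v = y - 1`. -/
theorem Tutte_eq_corankNullity
    {G S : Type*} [Group G] [MulAction G S] [DecidableEq S]
    (M : GSemimatroid G S) (hcof : M.Cofinite) (htr : M.Translative) :
    ∀ x y : ℤ,
      M.Tutte x y =
        ∑ᶠ O : M.COrb, (x - 1) ^ (M.rkQ Set.univ - M.corbRk O) *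
          (y - 1) ^ (M.corbCard O - M.corbRk O) := by
  intro x y
  haveI : Finite M.COrb := hcof
  haveI : Fintype M.COrb := Fintype.ofFinite _
  set f : Set (E G S) → ℤ := fun A =>
    (x - 1) ^ (M.rkQ Set.univ - M.rkQ A) * (y - 1) ^ (Nat.card A - M.rkQ A) with hf
  -- every summand on the RHS is `f (M.uA O)`
  have hterm : ∀ O : M.COrb,
      (x - 1) ^ (M.rkQ Set.univ - M.corbRk O) * (y - 1) ^ (M.corbCard O - M.corbRk O)
        = f (M.uA O) := by
    intro O
    induction O using Quot.ind with
    | _ X =>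
      have h1 : M.uA (Quot.mk M.cenRel X) = under G X.1 := rfl
      have h2 : M.corbRk (Quot.mk M.cenRel X) = M.rk X.1 := rfl
      have h3 : M.corbCard (Quot.mk M.cenRel X) = X.1.card := rfl
      rw [h1, h2, h3, hf]
      dsimp only
      rw [M.rkQ_under htr X.2, M.card_under htr X.2]
  -- CQ is the image of uA
  have hCQ : M.CQ = ↑(Finset.univ.image M.uA) := by
    ext A
    simp only [Finset.coe_image, Finset.coe_univ, Set.image_univ, Set.mem_range]
    constructor
    · rintro ⟨X, hX, rfl⟩
      exact ⟨Quot.mk M.cenRel ⟨X, hX⟩, rfl⟩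
    · rintro ⟨O, rfl⟩
      induction O using Quot.ind with
      | _ X => exact ⟨X.1, X.2, rfl⟩
  -- m A counts the fiber of uA over A
  have hm : ∀ A : Set (E G S),
      M.m A = (Finset.univ.filter (fun O => M.uA O = A)).card := by
    intro A
    have hp : ∀ O : M.COrb,
        (∃ X : M.Cen, under G X.1 = A ∧ Quot.mk M.cenRel X = O) ↔ M.uA O = A := by
      intro O
      constructor
      · rintro ⟨X, h1, rfl⟩; exact h1
      · intro h
        induction O using Quot.ind with
        | _ X => exact ⟨X, h, rfl⟩
    unfold m
    simp only [hp]
    rw [Nat.card_eq_fintype_card, Fintype.card_subtype]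
  calc M.Tutte x y
      = ∑ᶠ A ∈ M.CQ, (M.m A : ℤ) * f A := by
        unfold Tutte
        congr 1
        funext A
        congr 1
        funext _
        rw [hf, mul_assoc]
    _ = ∑ A ∈ Finset.univ.image M.uA, (M.m A : ℤ) * f A := by
        rw [hCQ, finsum_mem_coe_finset]
    _ = ∑ A ∈ Finset.univ.image M.uA,
          ((Finset.univ.filter (fun O => M.uA O = A)).card : ℤ) * f A := by
        refine Finset.sum_congr rfl fun A _ => ?_
        rw [hm A]
    _ = ∑ O : M.COrb, f (M.uA O) := by
        rw [Finset.sum_comp f M.uA]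
        refine Finset.sum_congr rfl fun A _ => ?_
        rw [nsmul_eq_mul]
    _ = ∑ᶠ O : M.COrb, f (M.uA O) := (finsum_eq_sum_of_fintype _).symm
    _ = _ := by
        refine finsum_congr fun O => ?_
        rw [hterm O]
end

section
/- Let 𝔖 be a weakly translative cofinite G-semimatroid. Then for every flat x∈ℒ, the interval [0̂, Gx] in the quotient poset P_𝔖 and the interval [cl(∅), x] in ℒ are isomorphic as posets. In particular, every lower interval of P_𝔖 is a geometric lattice. -/
open scoped Classical Pointwise


open GSemimatroid

namespace GSemimatroid

variable {G S : Type*} [Group G] [MulAction G S] [DecidableEq S]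

/-- The flats of the underlying semimatroid. -/
abbrev Flat (M : GSemimatroid G S) : Type _ :=
  {X : Finset S // M.toFinSemimatroid.IsFlat X}

/-- The `G`-orbit relation on flats. -/
def flatOrbRel (M : GSemimatroid G S) (X Y : M.Flat) : Prop :=
  ∃ g : G, X.1.image (g • ·) = Y.1

/-- The quotient poset `P_𝔖 = ℒ/G` (as a quotient set). -/
def PS (M : GSemimatroid G S) : Type _ := Quot M.flatOrbRel

/-- The order on `P_𝔖`: `GX ≤ GY` iff `X ⊆ gY` for some `g ∈ G`. -/
def PSle (M : GSemimatroid G S) (p q : M.PS) : Prop :=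
  ∃ (X Y : M.Flat) (g : G),
    Quot.mk M.flatOrbRel X = p ∧ Quot.mk M.flatOrbRel Y = q ∧ X.1 ⊆ Y.1.image (g • ·)

/-- The rank function on `P_𝔖`, induced by `rk`. -/
def prk (M : GSemimatroid G S) : M.PS → ℕ :=
  Quot.lift (fun X => M.rk X.1) (by
    rintro X Y ⟨g, hg⟩
    try dsimp only
    rw [← hg]
    exact (M.rk_smul g X.2.1).symm)

end GSemimatroid
section Aux

namespace GSemimatroid

variable {G S : Type*} [Group G] [MulAction G S] [DecidableEq S]
variable (M : GSemimatroid G S)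

open FinSemimatroid

lemma empty_mem : (∅ : Finset S) ∈ M.C := by
  obtain ⟨X, hX⟩ := M.nonempty
  exact M.downClosed hX (Finset.empty_subset X)

/-- Lemma A: closure is monotone in membership. -/
lemma mem_cl_mono {K V : Finset S} {y : S} (hV : V ∈ M.C) (hKV : K ⊆ V)
    (hy : y ∈ M.cl K) : y ∈ M.cl V := by
  obtain ⟨hyC, hyrk⟩ := hy
  have hK : K ∈ M.C := M.downClosed hV hKV
  have hKsub : K ⊆ insert y K ∩ V := by
    intro a ha; exact Finset.mem_inter.2 ⟨Finset.mem_insert_of_mem ha, hKV ha⟩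
  have hinterC : insert y K ∩ V ∈ M.C :=
    M.downClosed hyC (Finset.inter_subset_left)
  have hrkinter : M.rk (insert y K ∩ V) = M.rk (insert y K) := by
    have h1 := M.r2 hK hinterC hKsub
    have h2 := M.r2 hinterC hyC (Finset.inter_subset_left)
    omega
  have hunionC : insert y K ∪ V ∈ M.C := M.cr1 hyC hV hrkinter.symm
  have hunion : insert y K ∪ V = insert y V := by
    rw [Finset.insert_union, Finset.union_eq_right.2 hKV]
  rw [hunion] at hunionC
  have h3 := M.r3 hyC hV (by rw [hunion]; exact hunionC)
  rw [hunion, hrkinter, hyrk] at h3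
  have h4 := M.r2 hV hunionC (Finset.subset_insert y V)
  exact ⟨hunionC, le_antisymm (by omega) h4⟩

/-- Equal-rank nested flats coincide (one flat suffices). -/
lemma subset_of_flat_rk_le {Z W : Finset S} (hZ : M.IsFlat Z) (hW : W ∈ M.C)
    (hsub : Z ⊆ W) (hrk : M.rk W ≤ M.rk Z) : W ⊆ Z := by
  intro w hw
  have hins : insert w Z ∈ M.C := M.downClosed hW (Finset.insert_subset hw hsub)
  have h1 := M.r2 hZ.1 hins (Finset.subset_insert w Z)
  have h2 := M.r2 hins hW (Finset.insert_subset hw hsub)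
  have : w ∈ M.cl Z := ⟨hins, by omega⟩
  rw [hZ.2] at this; exact this

lemma rk_insert_le {Z : Finset S} {w : S} (hZ : Z ∈ M.C)
    (hins : insert w Z ∈ M.C) : M.rk (insert w Z) ≤ M.rk Z + 1 := by
  have heq : ({w} : Finset S) ∪ Z = insert w Z := (Finset.insert_eq w Z).symm
  have h3 := M.r3 (M.singleton_mem w) hZ (by rw [heq]; exact hins)
  rw [heq] at h3
  have h1 := M.r1 _ (M.singleton_mem w)
  simp only [Finset.card_singleton] at h1
  omega

/-- Lemma B: a central set all of whose elements lie in `cl A ⊇ A` has rank `rk A`. -/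
lemma rk_eq_of_subset_cl {A : Finset S} :
    ∀ (n : ℕ) (B : Finset S), (B \ A).card = n → A ⊆ B → B ∈ M.C →
      (∀ b ∈ B, b ∈ M.cl A) → M.rk B = M.rk A := by
  intro n
  induction n with
  | zero =>
    intro B hcard hAB hBC _
    have : B = A := Finset.Subset.antisymm
      (fun b hb => by
        by_contra hbA
        have : b ∈ B \ A := Finset.mem_sdiff.2 ⟨hb, hbA⟩
        rw [Finset.card_eq_zero.1 hcard] at this
        exact absurd this (Finset.notMem_empty b)) hAB
    rw [this]
  | succ n ih =>
    intro B hcard hAB hBC hcl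
    have hne : (B \ A).Nonempty := by
      rw [← Finset.card_pos, hcard]; omega
    obtain ⟨b, hb⟩ := hne
    obtain ⟨hbB, hbA⟩ := Finset.mem_sdiff.1 hb
    set B' := B.erase b with hB'
    have hB'C : B' ∈ M.C := M.downClosed hBC (Finset.erase_subset b B)
    have hAB' : A ⊆ B' := fun a ha =>
      Finset.mem_erase.2 ⟨fun h => hbA (h ▸ ha), hAB ha⟩
    have hcard' : (B' \ A).card = n := by
      have : B' \ A = (B \ A).erase b := by
        ext z
        simp only [hB', Finset.mem_erase, Finset.mem_sdiff]
        tauto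
      rw [this, Finset.card_erase_of_mem hb, hcard]
      omega
    have hrkB' : M.rk B' = M.rk A :=
      ih B' hcard' hAB' hB'C (fun z hz => hcl z (Finset.erase_subset b B hz))
    have hbcl : b ∈ M.cl B' := M.mem_cl_mono hB'C hAB' (hcl b hbB)
    have : M.rk (insert b B') = M.rk B' := hbcl.2
    rw [Finset.insert_erase hbB] at this
    rw [this, hrkB']

end GSemimatroid

section ClFx

namespace GSemimatroid

variable {G S : Type*} [Group G] [MulAction G S] [DecidableEq S]
variable (M : GSemimatroid G S)

open FinSemimatroid

/-- The closure of `A ⊆ x` inside the flat `x`, as a finset. -/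
noncomputable def clFx (x A : Finset S) : Finset S :=
  x.filter (fun y => insert y A ∈ M.C ∧ M.rk (insert y A) = M.rk A)

variable {x A : Finset S} (hx : M.IsFlat x) (hA : A ⊆ x)

lemma mem_clFx {y : S} : y ∈ M.clFx x A ↔ y ∈ x ∧ y ∈ M.cl A := by
  simp [clFx, FinSemimatroid.cl]

lemma clFx_subset_x : M.clFx x A ⊆ x := Finset.filter_subset _ _

lemma cl_subset_x (hx : M.IsFlat x) (hA : A ⊆ x) {y : S} (hy : y ∈ M.cl A) :
    y ∈ x := by
  have := M.mem_cl_mono hx.1 hA hy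
  rw [hx.2] at this; exact this

lemma mem_clFx_iff_cl (hx : M.IsFlat x) (hA : A ⊆ x) {y : S} :
    y ∈ M.clFx x A ↔ y ∈ M.cl A :=
  ⟨fun h => ((M.mem_clFx).1 h).2,
   fun h => (M.mem_clFx).2 ⟨M.cl_subset_x hx hA h, h⟩⟩

lemma subset_clFx (hx : M.IsFlat x) (hA : A ⊆ x) : A ⊆ M.clFx x A := by
  intro a ha
  have h : insert a A = A := Finset.insert_eq_self.2 ha
  exact (M.mem_clFx).2 ⟨hA ha, by rw [h]; exact M.downClosed hx.1 hA, by rw [h]⟩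

lemma clFx_mem_C (hx : M.IsFlat x) : M.clFx x A ∈ M.C :=
  M.downClosed hx.1 (M.clFx_subset_x)

lemma rk_clFx (hx : M.IsFlat x) (hA : A ⊆ x) : M.rk (M.clFx x A) = M.rk A := by
  refine M.rk_eq_of_subset_cl (M.clFx x A \ A).card _ rfl (M.subset_clFx hx hA)
    (M.clFx_mem_C hx) (fun b hb => ((M.mem_clFx).1 hb).2)

lemma clFx_isFlat (hx : M.IsFlat x) (hA : A ⊆ x) : M.IsFlat (M.clFx x A) := by
  refine ⟨M.clFx_mem_C hx, ?_⟩
  ext y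
  constructor
  · rintro ⟨hyC, hyrk⟩
    have hAsub : insert y A ⊆ insert y (M.clFx x A) :=
      Finset.insert_subset_insert y (M.subset_clFx hx hA)
    have hins : insert y A ∈ M.C := M.downClosed hyC hAsub
    have h1 := M.r2 hins hyC hAsub
    have h2 := M.r2 (M.downClosed hx.1 hA) hins (Finset.subset_insert y A)
    rw [hyrk, M.rk_clFx hx hA] at h1
    have hycl : y ∈ M.cl A := ⟨hins, le_antisymm h1 h2⟩
    exact (M.mem_clFx_iff_cl hx hA).2 hycl
  · intro hy
    refine ⟨by rw [Finset.insert_eq_self.2 hy]; exact M.clFx_mem_C hx, ?_⟩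
    rw [Finset.insert_eq_self.2 hy]

lemma clFx_min (hx : M.IsFlat x) (hA : A ⊆ x) {V : Finset S} (hV : M.IsFlat V)
    (hAV : A ⊆ V) : M.clFx x A ⊆ V := by
  intro y hy
  have := M.mem_cl_mono hV.1 hAV ((M.mem_clFx_iff_cl hx hA).1 hy)
  rw [hV.2] at this; exact this

/-- `cl ∅` is contained in every flat. -/
lemma F0_subset_flat {F0 Z : Finset S} (hF0 : (↑F0 : Set S) = M.cl ∅)
    (hZ : M.IsFlat Z) : F0 ⊆ Z := by
  intro y hy
  have hycl : y ∈ M.cl (∅ : Finset S) := by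
    rw [← hF0]; exact_mod_cast hy
  have := M.mem_cl_mono hZ.1 (Finset.empty_subset Z) hycl
  rw [hZ.2] at this; exact this

end GSemimatroid

end ClFx

section Orbits

namespace GSemimatroid

variable {G S : Type*} [Group G] [MulAction G S] [DecidableEq S]
variable (M : GSemimatroid G S)

open FinSemimatroid

lemma image_image_smul (g h : G) (X : Finset S) :
    (X.image (g • ·)).image (h • ·) = X.image ((h * g) • ·) := by
  rw [Finset.image_image]
  congr 1
  funext z
  simp [Function.comp, mul_smul]

lemma image_smul_inv_cancel (g : G) (X : Finset S) :
    (X.image (g • ·)).image (g⁻¹ • ·) = X := by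
  rw [image_image_smul, inv_mul_cancel]
  simp

/-- The image of a flat under the action is a flat. -/
lemma isFlat_image {Z : Finset S} (hZ : M.IsFlat Z) (g : G) :
    M.IsFlat (Z.image (g • ·)) := by
  refine ⟨M.smul_mem g hZ.1, ?_⟩
  ext y
  constructor
  · rintro ⟨hyC, hyrk⟩
    have himg : (insert y (Z.image (g • ·))).image (g⁻¹ • ·) =
        insert (g⁻¹ • y) Z := by
      rw [Finset.image_insert, image_smul_inv_cancel]
    have hC2 : insert (g⁻¹ • y) Z ∈ M.C := by
      rw [← himg]; exact M.smul_mem g⁻¹ hyC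
    have hrk2 : M.rk (insert (g⁻¹ • y) Z) = M.rk Z := by
      have e1 : M.rk ((insert y (Z.image (g • ·))).image (g⁻¹ • ·)) =
          M.rk (insert y (Z.image (g • ·))) := M.rk_smul g⁻¹ hyC
      have e2 : M.rk (Z.image (g • ·)) = M.rk Z := M.rk_smul g hZ.1
      rw [himg] at e1
      rw [e1, hyrk, e2]
    have : g⁻¹ • y ∈ M.cl Z := ⟨hC2, hrk2⟩
    rw [hZ.2] at this
    exact Finset.mem_coe.2 (Finset.mem_image.2 ⟨g⁻¹ • y, this, by simp⟩)
  · intro hy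
    have h : insert y (Z.image (g • ·)) = Z.image (g • ·) :=
      Finset.insert_eq_self.2 (Finset.mem_coe.1 hy)
    exact ⟨by rw [h]; exact M.smul_mem g hZ.1, by rw [h]⟩

/-- **Key lemma** (weak translativity): a flat contained in `x` whose translate is
also contained in `x` is fixed by that translation. -/
lemma image_eq_of_subset (hwt : M.WeaklyTranslative) {x Z : Finset S}
    (hx : x ∈ M.C) (hZ : M.IsFlat Z) (hZx : Z ⊆ x) (g : G)
    (hgZx : Z.image (g • ·) ⊆ x) : Z.image (g • ·) = Z := by
  have hsub : Z.image (g • ·) ⊆ Z := by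
    intro w hw
    obtain ⟨z, hz, rfl⟩ := Finset.mem_image.1 hw
    have hpair : ({z, g • z} : Finset S) ∈ M.C := by
      refine M.downClosed hx ?_
      intro a ha
      rcases Finset.mem_insert.1 ha with h | h
      · exact hZx (h ▸ hz)
      · rw [Finset.mem_singleton.1 h]
        exact hgZx (Finset.mem_image.2 ⟨z, hz, rfl⟩)
    have hrkp := hwt g z hpair
    have hins : insert (g • z) ({z} : Finset S) = ({z, g • z} : Finset S) :=
      Finset.pair_comm (g • z) z
    have hcl1 : g • z ∈ M.cl {z} := by
      refine ⟨by rw [hins]; exact hpair, ?_⟩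
      rw [hins, hrkp]
    have hzZ : ({z} : Finset S) ⊆ Z := Finset.singleton_subset_iff.2 hz
    have := M.mem_cl_mono hZ.1 hzZ hcl1
    rw [hZ.2] at this
    exact this
  have hcard : Z.card ≤ (Z.image (g • ·)).card := by
    rw [Finset.card_image_of_injective Z (MulAction.injective g)]
  exact Finset.eq_of_subset_of_card_le hsub hcard

lemma flatOrbRel_equiv : Equivalence M.flatOrbRel := by
  constructor
  · intro X
    exact ⟨1, by simp [Finset.image_id']⟩
  · rintro X Y ⟨g, hg⟩
    exact ⟨g⁻¹, by rw [← hg, image_smul_inv_cancel]⟩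
  · rintro X Y Z ⟨g, hg⟩ ⟨h, hh⟩
    exact ⟨h * g, by rw [← hh, ← hg, image_image_smul]⟩

lemma quot_mk_eq_iff (X Y : M.Flat) :
    Quot.mk M.flatOrbRel X = Quot.mk M.flatOrbRel Y ↔ M.flatOrbRel X Y := by
  rw [Quot.eq]
  exact Equivalence.eqvGen_iff M.flatOrbRel_equiv

end GSemimatroid

end Orbits

section MoreFlats

namespace GSemimatroid

variable {G S : Type*} [Group G] [MulAction G S] [DecidableEq S]
variable (M : GSemimatroid G S)

open FinSemimatroid

lemma mem_cl_self {Z : Finset S} {z : S} (hz : z ∈ Z) (hZ : Z ∈ M.C) :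
    z ∈ M.cl Z :=
  ⟨by rw [Finset.insert_eq_self.2 hz]; exact hZ, by rw [Finset.insert_eq_self.2 hz]⟩

lemma inter_isFlat {Z W : Finset S} (hZ : M.IsFlat Z) (hW : M.IsFlat W)
    (hC : Z ∩ W ∈ M.C) : M.IsFlat (Z ∩ W) := by
  refine ⟨hC, ?_⟩
  ext y
  constructor
  · intro hy
    have h1 := M.mem_cl_mono hZ.1 (Finset.inter_subset_left) hy
    have h2 := M.mem_cl_mono hW.1 (Finset.inter_subset_right) hy
    rw [hZ.2] at h1; rw [hW.2] at h2
    simp only [Finset.coe_inter, Set.mem_inter_iff]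
    exact ⟨h1, h2⟩
  · intro hy
    exact M.mem_cl_self (by exact_mod_cast hy) hC

lemma rk_lt_of_flat_ssubset {Z W : Finset S} (hZ : M.IsFlat Z) (hWC : W ∈ M.C)
    (hsub : Z ⊆ W) (hne : Z ≠ W) : M.rk Z < M.rk W := by
  by_contra h
  push_neg at h
  exact hne (Finset.Subset.antisymm hsub (M.subset_of_flat_rk_le hZ hWC hsub h))

end GSemimatroid

end MoreFlats

/-- For a weakly translative cofinite `G`-semimatroid, every lower
interval `[0̂, Gx]` of the quotient poset `P_𝔖` is isomorphic (as a poset) to the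
interval `[cl ∅, x]` of the semilattice of flats `ℒ`.  In particular (via the
isomorphism) every lower interval of `P_𝔖` is a (finite) geometric lattice. -/
theorem quotientPoset_lower_interval_iso
    {G S : Type*} [Group G] [MulAction G S] [DecidableEq S]
    (M : GSemimatroid G S) (hcof : M.Cofinite) (hwt : M.WeaklyTranslative)
    (x : M.Flat) (F0 : M.Flat) (hF0 : (↑F0.1 : Set S) = M.cl ∅) :
    (∃ f : {p : M.PS // M.PSle p (Quot.mk M.flatOrbRel x)} → ↥(Set.Icc F0 x),
      Function.Bijective f ∧
        ∀ p q : {p : M.PS // M.PSle p (Quot.mk M.flatOrbRel x)},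
          (M.PSle p.1 q.1 ↔ f p ≤ f q)) ∧
    ∃ N : ℕ, IsFinGeomLatticeAtMost ↥(Set.Icc F0 x) (fun z => M.rk z.1.1) N := by
  classical
  have hF0x : F0 ≤ x := M.F0_subset_flat hF0 x.2
  have hxmem : x ∈ Set.Icc F0 x := Set.mem_Icc.2 ⟨hF0x, le_refl x⟩
  -- key rigidity lemma
  have key : ∀ (Z : M.Flat) (g : G), Z.1 ⊆ x.1 → Z.1.image (g • ·) ⊆ x.1 →
      Z.1.image (g • ·) = Z.1 := fun Z g h1 h2 =>
    M.image_eq_of_subset hwt x.2.1 Z.2 h1 g h2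
  -- uniqueness of representatives below x
  have uniq : ∀ Z W : M.Flat, Z.1 ⊆ x.1 → W.1 ⊆ x.1 →
      Quot.mk M.flatOrbRel Z = Quot.mk M.flatOrbRel W → Z = W := by
    intro Z W hZ hW hq
    obtain ⟨g, hg⟩ := (M.quot_mk_eq_iff Z W).1 hq
    have := key Z g hZ (by rw [hg]; exact hW)
    exact Subtype.ext (by rw [← hg, this])
  -- existence of representatives below x
  have exrep : ∀ p : {p : M.PS // M.PSle p (Quot.mk M.flatOrbRel x)},
      ∃ Z : M.Flat, Z.1 ⊆ x.1 ∧ Quot.mk M.flatOrbRel Z = p.1 := by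
    rintro ⟨p, X, Y, g, hX, hY, hsub⟩
    obtain ⟨k, hk⟩ := (M.quot_mk_eq_iff Y x).1 hY
    refine ⟨⟨X.1.image ((k * g⁻¹) • ·), M.isFlat_image X.2 _⟩, ?_, ?_⟩
    · have h1 : X.1.image ((k * g⁻¹) • ·) ⊆
          (Y.1.image (g • ·)).image ((k * g⁻¹) • ·) :=
        Finset.image_subset_image hsub
      rw [GSemimatroid.image_image_smul] at h1
      have : k * g⁻¹ * g = k := by group
      rw [this, hk] at h1
      exact h1
    · rw [(M.quot_mk_eq_iff _ X).2 ⟨(k * g⁻¹)⁻¹, by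
        rw [GSemimatroid.image_image_smul, inv_mul_cancel]; simp⟩]
      exact hX
  set rep : {p : M.PS // M.PSle p (Quot.mk M.flatOrbRel x)} → M.Flat :=
    fun p => Classical.choose (exrep p) with hrep
  have repspec : ∀ p, (rep p).1 ⊆ x.1 ∧ Quot.mk M.flatOrbRel (rep p) = p.1 :=
    fun p => Classical.choose_spec (exrep p)
  have memIcc : ∀ {Z : M.Flat}, Z.1 ⊆ x.1 → Z ∈ Set.Icc F0 x := by
    intro Z hZ
    exact Set.mem_Icc.2 ⟨M.F0_subset_flat hF0 Z.2, hZ⟩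
  set f : {p : M.PS // M.PSle p (Quot.mk M.flatOrbRel x)} → ↥(Set.Icc F0 x) :=
    fun p => ⟨rep p, memIcc (repspec p).1⟩ with hf
  constructor
  · refine ⟨f, ⟨?_, ?_⟩, ?_⟩
    · -- injective
      intro p p' h
      have : rep p = rep p' := Subtype.ext_iff.1 h
      refine Subtype.ext ?_
      rw [← (repspec p).2, ← (repspec p').2, this]
    · -- surjective
      intro W
      have hWx : W.1.1 ⊆ x.1 := W.2.2
      set p : {p : M.PS // M.PSle p (Quot.mk M.flatOrbRel x)} :=
        ⟨Quot.mk M.flatOrbRel W.1, ⟨W.1, x, 1, rfl, rfl, by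
          simp [Finset.image_id']; exact hWx⟩⟩ with hp
      refine ⟨p, ?_⟩
      have h2 : Quot.mk M.flatOrbRel (rep p) = Quot.mk M.flatOrbRel W.1 :=
        (repspec p).2
      exact Subtype.ext (uniq (rep p) W.1 (repspec p).1 hWx h2)
    · -- order isomorphism
      intro p p'
      constructor
      · rintro ⟨X, Y, g, hX, hY, hsub⟩
        obtain ⟨h, hh⟩ := (M.quot_mk_eq_iff X (rep p)).1 (by rw [hX, (repspec p).2])
        obtain ⟨l, hl⟩ := (M.quot_mk_eq_iff (rep p') Y).1 (by rw [hY, (repspec p').2])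
        -- (rep p).1 ⊆ image m (rep p').1 with m = h * g * l
        have e1 : (Y.1.image (g • ·)).image (h • ·) = Y.1.image ((h * g) • ·) :=
          GSemimatroid.image_image_smul g h Y.1
        have e2 : Y.1.image ((h * g) • ·) = (rep p').1.image ((h * g * l) • ·) := by
          rw [← hl, GSemimatroid.image_image_smul]
        have hsub2 : (rep p).1 ⊆ ((rep p').1).image ((h * g * l) • ·) := by
          rw [← hh, ← e2, ← e1]
          exact Finset.image_subset_image hsub
        set m : G := h * g * l
        have hsub3 : ((rep p).1).image (m⁻¹ • ·) ⊆ (rep p').1 := by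
          have h4 := Finset.image_subset_image (f := (m⁻¹ • ·)) hsub2
          rwa [GSemimatroid.image_smul_inv_cancel] at h4
        have := key (rep p) m⁻¹ (repspec p).1
          (fun a ha => (repspec p').1 (hsub3 ha))
        have hfin : (rep p).1 ⊆ (rep p').1 := by rw [← this]; exact hsub3
        exact hfin
      · intro hle
        exact ⟨rep p, rep p', 1, (repspec p).2, (repspec p').2, by
          simpa [Finset.image_id'] using (show (rep p).1 ⊆ (rep p').1 from hle)⟩
  · -- the interval is a finite geometric lattice
    have memIcc' : ∀ {Z : Finset S} (hZ : M.IsFlat Z), Z ⊆ x.1 →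
        (⟨Z, hZ⟩ : M.Flat) ∈ Set.Icc F0 x := fun hZ hx' =>
      Set.mem_Icc.2 ⟨M.F0_subset_flat hF0 hZ, hx'⟩
    set bot : ↥(Set.Icc F0 x) := ⟨F0, Set.mem_Icc.2 ⟨le_refl F0, hF0x⟩⟩ with hbotdef
    have hisbot : IsBot bot := fun a => M.F0_subset_flat hF0 a.1.2
    have rk_lt : ∀ a b : ↥(Set.Icc F0 x), a < b → M.rk a.1.1 < M.rk b.1.1 := by
      intro a b hab
      have hsub : a.1.1 ⊆ b.1.1 := le_of_lt hab
      have hne : a.1.1 ≠ b.1.1 := fun h => (ne_of_lt hab) (Subtype.ext (Subtype.ext h))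
      exact M.rk_lt_of_flat_ssubset a.1.2 b.1.2.1 hsub hne
    have hfin : Finite ↥(Set.Icc F0 x) := by
      refine Finite.of_injective
        (fun a => (⟨a.1.1, Finset.mem_powerset.2 a.2.2⟩ : {Y // Y ∈ x.1.powerset})) ?_
      intro a b h
      simp only [Subtype.mk.injEq] at h
      exact Subtype.ext (Subtype.ext h)
    -- meets
    set meetF : ↥(Set.Icc F0 x) → ↥(Set.Icc F0 x) → ↥(Set.Icc F0 x) := fun a b =>
      ⟨⟨a.1.1 ∩ b.1.1, M.inter_isFlat a.1.2 b.1.2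
          (M.downClosed x.2.1 ((Finset.inter_subset_left).trans a.2.2))⟩,
        memIcc' _ ((Finset.inter_subset_left).trans a.2.2)⟩ with hmeetF
    have meet_isGLB : ∀ a b : ↥(Set.Icc F0 x), IsGLB {a, b} (meetF a b) := by
      intro a b
      constructor
      · intro c hc
        simp only [Set.mem_insert_iff, Set.mem_singleton_iff] at hc
        rcases hc with rfl | rfl
        · exact (Finset.inter_subset_left : (meetF c b).1.1 ⊆ c.1.1)
        · exact (Finset.inter_subset_right : (meetF a c).1.1 ⊆ c.1.1)
      · intro c hc
        have h1 : c ≤ a := hc (Set.mem_insert _ _)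
        have h2 : c ≤ b := hc (Set.mem_insert_of_mem _ rfl)
        exact (Finset.subset_inter h1 h2 : c.1.1 ⊆ (meetF a b).1.1)
    -- joins
    set joinF : ↥(Set.Icc F0 x) → ↥(Set.Icc F0 x) → ↥(Set.Icc F0 x) := fun a b =>
      ⟨⟨M.clFx x.1 (a.1.1 ∪ b.1.1),
          M.clFx_isFlat x.2 (Finset.union_subset a.2.2 b.2.2)⟩,
        memIcc' _ (M.clFx_subset_x)⟩ with hjoinF
    have join_isLUB : ∀ a b : ↥(Set.Icc F0 x), IsLUB {a, b} (joinF a b) := by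
      intro a b
      have hunion : a.1.1 ∪ b.1.1 ⊆ x.1 := Finset.union_subset a.2.2 b.2.2
      constructor
      · intro c hc
        simp only [Set.mem_insert_iff, Set.mem_singleton_iff] at hc
        rcases hc with rfl | rfl
        · exact ((Finset.subset_union_left).trans
            (M.subset_clFx x.2 (Finset.union_subset c.2.2 b.2.2)) :
            c.1.1 ⊆ (joinF c b).1.1)
        · exact ((Finset.subset_union_right).trans
            (M.subset_clFx x.2 (Finset.union_subset a.2.2 c.2.2)) :
            c.1.1 ⊆ (joinF a c).1.1)
      · intro c hc
        have h1 : a ≤ c := hc (Set.mem_insert _ _)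
        have h2 : b ≤ c := hc (Set.mem_insert_of_mem _ rfl)
        exact (M.clFx_min x.2 hunion c.1.2 (Finset.union_subset h1 h2) :
          (joinF a b).1.1 ⊆ c.1.1)
    refine ⟨Nat.card {a : ↥(Set.Icc F0 x) | bot ⋖ a}, hfin, bot, hisbot,
      fun a b => ⟨meetF a b, meet_isGLB a b⟩,
      fun a b => ⟨joinF a b, join_isLUB a b⟩, ?_, ?_, ?_, le_refl _⟩
    · -- covers increase rank by one
      intro a b hab
      have hrklt := rk_lt a b hab.1
      obtain ⟨w, hwb, hwa, hins⟩ := M.cr2 a.1.2.1 b.1.2.1 hrklt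
      have hiwx : insert w a.1.1 ⊆ x.1 :=
        Finset.insert_subset_iff.2 ⟨b.2.2 hwb, a.2.2⟩
      set V : ↥(Set.Icc F0 x) :=
        ⟨⟨M.clFx x.1 (insert w a.1.1), M.clFx_isFlat x.2 hiwx⟩,
          memIcc' _ (M.clFx_subset_x)⟩ with hV
      have haV : a < V := by
        have hle : a ≤ V :=
          ((Finset.subset_insert w a.1.1).trans (M.subset_clFx x.2 hiwx) :
            a.1.1 ⊆ V.1.1)
        refine lt_of_le_of_ne hle (fun h => hwa ?_)
        have hwV : w ∈ V.1.1 :=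
          (M.subset_clFx x.2 hiwx) (Finset.mem_insert_self w a.1.1)
        have h7 : a.1.1 = V.1.1 := congrArg (fun z => z.1.1) h
        rw [h7]
        exact hwV
      have hVb : V ≤ b :=
        (M.clFx_min x.2 hiwx b.1.2
          (Finset.insert_subset_iff.2 ⟨hwb, le_of_lt hab.1⟩) : V.1.1 ⊆ b.1.1)
      have hVeq : V = b := by
        by_contra hne
        exact hab.2 haV (lt_of_le_of_ne hVb hne)
      have h5 : M.rk b.1.1 = M.rk (insert w a.1.1) := by
        rw [← hVeq]
        exact M.rk_clFx x.2 hiwx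
      have h6 := M.rk_insert_le a.1.2.1 hins
      show M.rk b.1.1 = M.rk a.1.1 + 1
      omega
    · -- atomic
      intro Z
      refine ⟨{a : ↥(Set.Icc F0 x) | bot ⋖ a ∧ a ≤ Z}, fun a ha => ha.1, ?_, ?_⟩
      · intro a ha
        exact ha.2
      · intro U hU
        show Z.1.1 ⊆ U.1.1
        intro w hw
        by_cases hwF0 : w ∈ F0.1
        · exact (hisbot U : F0.1 ⊆ U.1.1) hwF0
        · have hiwx : insert w F0.1 ⊆ x.1 :=
            Finset.insert_subset_iff.2 ⟨Z.2.2 hw, hF0x⟩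
          have hinsC : insert w F0.1 ∈ M.C := M.downClosed x.2.1 hiwx
          set aw : ↥(Set.Icc F0 x) :=
            ⟨⟨M.clFx x.1 (insert w F0.1), M.clFx_isFlat x.2 hiwx⟩,
              memIcc' _ (M.clFx_subset_x)⟩ with haw
          have hrkins : M.rk (insert w F0.1) = M.rk F0.1 + 1 := by
            have hle := M.rk_insert_le F0.2.1 hinsC
            have hgt : M.rk F0.1 < M.rk (insert w F0.1) := by
              by_contra hc
              push_neg at hc
              have hge := M.r2 F0.2.1 hinsC (Finset.subset_insert w F0.1)
              have : w ∈ M.cl F0.1 := ⟨hinsC, le_antisymm hc hge⟩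
              rw [F0.2.2] at this
              exact hwF0 this
            omega
          have hrkaw : M.rk aw.1.1 = M.rk F0.1 + 1 := by
            rw [show aw.1.1 = M.clFx x.1 (insert w F0.1) from rfl,
              M.rk_clFx x.2 hiwx, hrkins]
          have hwaw : w ∈ aw.1.1 :=
            (M.subset_clFx x.2 hiwx) (Finset.mem_insert_self w F0.1)
          have hbotaw : bot < aw := by
            refine lt_of_le_of_ne (hisbot aw) (fun h => hwF0 ?_)
            have h7 : (F0.1 : Finset S) = aw.1.1 := congrArg (fun z => z.1.1) h
            rw [h7]
            exact hwaw
          have hcov : bot ⋖ aw := by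
            refine ⟨hbotaw, fun c hc hcaw => ?_⟩
            have h1 := rk_lt bot c hc
            have h2 := rk_lt c aw hcaw
            rw [hrkaw] at h2
            have : M.rk (bot.1.1) = M.rk F0.1 := rfl
            omega
          have hawZ : aw ≤ Z :=
            (M.clFx_min x.2 hiwx Z.1.2
              (Finset.insert_subset_iff.2 ⟨hw, M.F0_subset_flat hF0 Z.1.2⟩) :
              aw.1.1 ⊆ Z.1.1)
          have hawU : aw ≤ U := hU ⟨hcov, hawZ⟩
          exact hawU hwaw
    · -- semimodularity
      intro a b m j hm hj
      have hm' : m = meetF a b := hm.unique (meet_isGLB a b)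
      have hj' : j = joinF a b := hj.unique (join_isLUB a b)
      have hunion : a.1.1 ∪ b.1.1 ⊆ x.1 := Finset.union_subset a.2.2 b.2.2
      have hUC : a.1.1 ∪ b.1.1 ∈ M.C := M.downClosed x.2.1 hunion
      have h3 := M.r3 a.1.2.1 b.1.2.1 hUC
      have hjr : M.rk j.1.1 = M.rk (a.1.1 ∪ b.1.1) := by
        rw [hj']
        exact M.rk_clFx x.2 hunion
      have hmr : M.rk m.1.1 = M.rk (a.1.1 ∩ b.1.1) := by rw [hm']
      show M.rk j.1.1 + M.rk m.1.1 ≤ M.rk a.1.1 + M.rk b.1.1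
      omega
end Aux
end
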